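/- arXiv:1709.02884 — 3 statements merged into one kernel-verified Lean document; each statement's English description precedes it below -/
import Mathlib

section
/- For all integers m' ≥ 1, m ≥ 1 and every real T ≥ 1, the polytope P(m',m,T) = {(d',d) ∈ ℝ^{m'} × ℝ^{m} : d'_j ≥ 0 for all j, d_i ≥ 0 for all i, Σ_{i=1}^{m} d_i ≤ 1 − 1/T, and Σ_{j=1}^{m'} d'_j + Σ_{i=1}^{m} d_i ≤ 1} is equal to the convex hull (over ℝ) of the finite set S(m',m,T) consisting of: the origin; the m' points e'_j (j = 1,…,m'); the m points (1 − 1/T)·e_i (i = 1,…,m); and the m'·m points (1/T)·e'_j + (1 − 1/T)·e_i (j = 1,…,m', i = 1,…,m). -/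
/-- The achievable degrees-of-freedom polytope (no CSIT, `m'` static users,
`m` dynamic users with coherence time `T`) equals the convex hull of the origin, the
static unit vectors `e'_j`, the scaled dynamic unit vectors `(1 - 1/T) • e_i`, and the
product-superposition points `(1/T) • e'_j + (1 - 1/T) • e_i`. -/
theorem dof_region_eq_convexHull (m' m : ℕ) (hm' : 1 ≤ m') (hm : 1 ≤ m)
    (T : ℝ) (hT : 1 ≤ T) :
    convexHull ℝ
      (({((0 : Fin m' → ℝ), (0 : Fin m → ℝ))} ∪
        (⋃ j : Fin m', {((Pi.single j 1 : Fin m' → ℝ), (0 : Fin m → ℝ))}) ∪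
        (⋃ i : Fin m, {((0 : Fin m' → ℝ), (1 - 1/T) • (Pi.single i 1 : Fin m → ℝ))}) ∪
        (⋃ j : Fin m', ⋃ i : Fin m,
          {((1/T) • (Pi.single j 1 : Fin m' → ℝ),
            (1 - 1/T) • (Pi.single i 1 : Fin m → ℝ))})) :
        Set ((Fin m' → ℝ) × (Fin m → ℝ))) =
    {p : (Fin m' → ℝ) × (Fin m → ℝ) |
      (∀ j, 0 ≤ p.1 j) ∧ (∀ i, 0 ≤ p.2 i) ∧ (∑ i, p.2 i ≤ 1 - 1/T) ∧
      ((∑ j, p.1 j) + (∑ i, p.2 i) ≤ 1)} := by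
  have hT0 : (0:ℝ) < T := lt_of_lt_of_le one_pos hT
  have hTinv_pos : (0:ℝ) < 1/T := by positivity
  have hTinv_le : 1/T ≤ 1 := by rw [div_le_one hT0]; exact hT
  have hc0 : (0:ℝ) ≤ 1 - 1/T := by linarith
  have hc1 : (1:ℝ) - 1/T < 1 := by linarith
  have hTi_pos : (0:ℝ) < T⁻¹ := by positivity
  have hTi_le : T⁻¹ ≤ 1 := by rw [← one_div]; exact hTinv_le
  apply Set.Subset.antisymm
  · apply convexHull_min
    · intro x hx
      simp only [Set.mem_union, Set.mem_singleton_iff, Set.mem_iUnion] at hx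
      rcases hx with ((h | ⟨j, h⟩) | ⟨i, h⟩) | ⟨j, i, h⟩ <;> subst h
      · refine ⟨fun j => le_refl _, fun i => le_refl _, ?_, ?_⟩ <;>
          simp <;> linarith
      · refine ⟨fun j' => ?_, fun i => le_refl _, ?_, ?_⟩
        · simp [Pi.single_apply]; split <;> norm_num
        · simp; linarith
        · simp [Finset.sum_pi_single']
      · refine ⟨fun j => le_refl _, fun i' => ?_, ?_, ?_⟩
        · simp only [Pi.smul_apply, smul_eq_mul]
          have : (0:ℝ) ≤ (Pi.single i 1 : Fin m → ℝ) i' := by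
            simp [Pi.single_apply]; split <;> norm_num
          positivity
        · simp [Finset.sum_pi_single', ← Finset.mul_sum]
        · simp [Finset.sum_pi_single', ← Finset.mul_sum]
          linarith
      · refine ⟨fun j' => ?_, fun i' => ?_, ?_, ?_⟩
        · simp only [Pi.smul_apply, smul_eq_mul]
          have : (0:ℝ) ≤ (Pi.single j 1 : Fin m' → ℝ) j' := by
            simp [Pi.single_apply]; split <;> norm_num
          positivity
        · simp only [Pi.smul_apply, smul_eq_mul]
          have : (0:ℝ) ≤ (Pi.single i 1 : Fin m → ℝ) i' := by
            simp [Pi.single_apply]; split <;> norm_num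
          positivity
        · simp [Finset.sum_pi_single', ← Finset.mul_sum]
        · simp [Finset.sum_pi_single', ← Finset.mul_sum]
    · -- convexity of the polytope
      intro x hx y hy a b ha hb hab
      obtain ⟨hx1, hx2, hx3, hx4⟩ := hx
      obtain ⟨hy1, hy2, hy3, hy4⟩ := hy
      have e1 : ∀ j, (a • x + b • y).1 j = a * x.1 j + b * y.1 j := by
        intro j; simp [Prod.fst_add, Prod.smul_fst]
      have e2 : ∀ i, (a • x + b • y).2 i = a * x.2 i + b * y.2 i := by
        intro i; simp [Prod.snd_add, Prod.smul_snd]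
      have s1 : ∑ j, (a • x + b • y).1 j = a * ∑ j, x.1 j + b * ∑ j, y.1 j := by
        simp only [e1, Finset.sum_add_distrib, Finset.mul_sum]
      have s2 : ∑ i, (a • x + b • y).2 i = a * ∑ i, x.2 i + b * ∑ i, y.2 i := by
        simp only [e2, Finset.sum_add_distrib, Finset.mul_sum]
      refine ⟨fun j => ?_, fun i => ?_, ?_, ?_⟩
      · rw [e1]; exact add_nonneg (mul_nonneg ha (hx1 j)) (mul_nonneg hb (hy1 j))
      · rw [e2]; exact add_nonneg (mul_nonneg ha (hx2 i)) (mul_nonneg hb (hy2 i))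
      · rw [s2]
        nlinarith [mul_le_mul_of_nonneg_left hx3 ha, mul_le_mul_of_nonneg_left hy3 hb]
      · rw [s1, s2]
        nlinarith [mul_le_mul_of_nonneg_left hx4 ha, mul_le_mul_of_nonneg_left hy4 hb]
  · -- polytope ⊆ convex hull
    intro p hp
    obtain ⟨h1, h2, h3, h4⟩ := hp
    set c : ℝ := 1 - 1/T with hc_def
    set s : ℝ := ∑ i, p.2 i with hs_def
    set s' : ℝ := ∑ j, p.1 j with hs'_def
    have hs0 : 0 ≤ s := Finset.sum_nonneg fun i _ => h2 i
    have hs1 : s < 1 := lt_of_le_of_lt h3 hc1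
    have h1s : (0:ℝ) < 1 - s := by linarith
    set u : Fin m' → ℝ := fun j => p.1 j / (1 - s) with hu_def
    set v : Fin m → ℝ := fun i => p.2 i / c with hv_def
    have hcv : ∀ i, c * v i = p.2 i := by
      intro i
      by_cases hc : c = 0
      · have hall : ∀ i ∈ Finset.univ, p.2 i = 0 := by
          rw [← Finset.sum_eq_zero_iff_of_nonneg (fun i _ => h2 i)]
          have : s ≤ 0 := by rw [hc] at h3; exact h3
          linarith
        simp [hv_def, hc, hall i (Finset.mem_univ i)]
      · show c * (p.2 i / c) = p.2 i; field_simp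
    have hv0 : ∀ i, 0 ≤ v i := fun i => div_nonneg (h2 i) hc0
    have hu0 : ∀ j, 0 ≤ u j := fun j => div_nonneg (h1 j) (le_of_lt h1s)
    set σv : ℝ := ∑ i, v i with hσv_def
    set σu : ℝ := ∑ j, u j with hσu_def
    have hcσv : c * σv = s := by
      rw [hσv_def, Finset.mul_sum, hs_def]
      exact Finset.sum_congr rfl fun i _ => hcv i
    have hσv0 : 0 ≤ σv := Finset.sum_nonneg fun i _ => hv0 i
    have hσv1 : σv ≤ 1 := by
      by_cases hc : c = 0
      · have : σv = 0 := by
          simp [hσv_def, hv_def, hc]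
        linarith
      · have hcpos : 0 < c := lt_of_le_of_ne hc0 (Ne.symm hc)
        nlinarith [hcσv, h3]
    have hσu0 : 0 ≤ σu := Finset.sum_nonneg fun j _ => hu0 j
    have hσu_eq : (1 - s) * σu = s' := by
      rw [hσu_def, Finset.mul_sum, hs'_def]
      refine Finset.sum_congr rfl fun j _ => ?_
      rw [hu_def]; field_simp
    have hσu1 : σu ≤ 1 := by nlinarith [hσu_eq]
    -- the convex combination
    set U : Option (Fin m') → ℝ := fun a => a.elim (1 - σu) u with hU_def
    set V : Option (Fin m) → ℝ := fun b => b.elim (1 - σv) v with hV_def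
    set w : Option (Fin m') × Option (Fin m) → ℝ := fun q => U q.1 * V q.2 with hw_def
    set z : Option (Fin m') × Option (Fin m) → (Fin m' → ℝ) × (Fin m → ℝ) := fun q =>
      ((q.2.elim (1:ℝ) (fun _ => 1/T)) • (q.1.elim (0 : Fin m' → ℝ) (fun j => Pi.single j 1)),
       c • (q.2.elim (0 : Fin m → ℝ) (fun i => Pi.single i 1))) with hz_def
    have hU0 : ∀ a, 0 ≤ U a := by
      rintro (_ | j)
      · simp [hU_def]; linarith
      · simpa [hU_def] using hu0 j
    have hV0 : ∀ b, 0 ≤ V b := by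
      rintro (_ | i)
      · simp [hV_def]; linarith
      · simpa [hV_def] using hv0 i
    have hUsum : ∑ a, U a = 1 := by
      rw [Fintype.sum_option]; simp [hU_def, hσu_def]
    have hVsum : ∑ b, V b = 1 := by
      rw [Fintype.sum_option]; simp [hV_def, hσv_def]
    have hwsum : ∑ q, w q = 1 := by
      rw [Fintype.sum_prod_type]
      simp only [hw_def]
      rw [← Finset.sum_mul_sum, hUsum, hVsum, one_mul]
    have hw0 : ∀ q ∈ Finset.univ, 0 ≤ w (q : Option (Fin m') × Option (Fin m)) := by
      intro q _
      exact mul_nonneg (hU0 q.1) (hV0 q.2)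
    have hzmem : ∀ q ∈ (Finset.univ : Finset (Option (Fin m') × Option (Fin m))),
        z q ∈ (({((0 : Fin m' → ℝ), (0 : Fin m → ℝ))} ∪
        (⋃ j : Fin m', {((Pi.single j 1 : Fin m' → ℝ), (0 : Fin m → ℝ))}) ∪
        (⋃ i : Fin m, {((0 : Fin m' → ℝ), (1 - 1/T) • (Pi.single i 1 : Fin m → ℝ))}) ∪
        (⋃ j : Fin m', ⋃ i : Fin m,
          {((1/T) • (Pi.single j 1 : Fin m' → ℝ),
            (1 - 1/T) • (Pi.single i 1 : Fin m → ℝ))})) :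
        Set ((Fin m' → ℝ) × (Fin m → ℝ))) := by
      rintro ⟨(_ | j), (_ | i)⟩ _ <;>
        simp only [Set.mem_union, Set.mem_singleton_iff, Set.mem_iUnion, hz_def]
      · left; left; left; simp
      · left; right; exact ⟨i, by simp [hc_def, one_div]⟩
      · left; left; right; exact ⟨j, by simp⟩
      · right; exact ⟨j, i, by simp [hc_def, one_div]⟩
    have key : Finset.univ.centerMass w z = p := by
      rw [Finset.centerMass, hwsum, inv_one, one_smul]
      have hfst : (∑ q, w q • z q).1 = p.1 := by
        rw [Prod.fst_sum]
        funext k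
        rw [Finset.sum_apply]
        rw [Fintype.sum_prod_type]
        simp only [Fintype.sum_option, hw_def, hz_def, hU_def, hV_def, Option.elim,
          Prod.smul_fst, Pi.smul_apply, smul_eq_mul, Pi.zero_apply, Pi.single_apply,
          mul_zero, zero_mul, mul_ite, ite_mul, Finset.sum_ite_eq', Finset.mem_univ,
          if_true, mul_one, one_mul, Finset.sum_const_zero, add_zero, zero_add]
        have hinner : ∀ x : Fin m', (∑ x_1 : Fin m, if k = x then u x * v x_1 * (1/T) else 0)
            = if k = x then u x * σv * (1/T) else 0 := by
          intro x
          by_cases hkx : k = x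
          · simp only [if_pos hkx]
            conv_rhs => rw [hσv_def, Finset.mul_sum, Finset.sum_mul]
          · simp [hkx]
        simp only [hinner]
        rw [Finset.sum_add_distrib, Finset.sum_ite_eq, Finset.sum_ite_eq]
        simp only [Finset.mem_univ, if_true]
        have hkey : u k * (1 - σv) + u k * σv * (1/T) = u k * (1 - s) := by
          rw [← hcσv, hc_def]; ring
        rw [hkey, hu_def]
        field_simp
      have hsnd : (∑ q, w q • z q).2 = p.2 := by
        rw [Prod.snd_sum]
        funext k
        rw [Finset.sum_apply]
        rw [Fintype.sum_prod_type]
        simp only [Fintype.sum_option, hw_def, hz_def, hU_def, hV_def, Option.elim,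
          Prod.smul_snd, Pi.smul_apply, smul_eq_mul, Pi.zero_apply, Pi.single_apply,
          mul_zero, zero_mul, mul_ite, ite_mul, Finset.sum_ite_eq', Finset.mem_univ,
          if_true, mul_one, one_mul, Finset.sum_const_zero, add_zero, zero_add]
        simp only [Finset.sum_ite_eq, Finset.mem_univ, if_true]
        rw [show (∑ x : Fin m', u x * v k * c) = σu * v k * c from by
          rw [hσu_def, Finset.sum_mul, Finset.sum_mul]]
        linear_combination hcv k
      exact Prod.ext hfst hsnd
    rw [← key]
    exact Finset.centerMass_mem_convexHull _ hw0 (by rw [hwsum]; norm_num) hzmem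
end

section
/- For all integers m' ≥ 1, m ≥ 1 and every real T > 1, the set of extreme points of the polytope P(m',m,T) = {(d',d) ∈ ℝ^{m'} × ℝ^{m} : d'_j ≥ 0 for all j, d_i ≥ 0 for all i, Σ_{i=1}^{m} d_i ≤ 1 − 1/T, Σ_{j=1}^{m'} d'_j + Σ_{i=1}^{m} d_i ≤ 1} is exactly the set S(m',m,T) = {0} ∪ {e'_j : j = 1,…,m'} ∪ {(1 − 1/T)·e_i : i = 1,…,m} ∪ {(1/T)·e'_j + (1 − 1/T)·e_i : j = 1,…,m', i = 1,…,m}, and this set has exactly (m'+1)(m+1) elements. -/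
section DofAux

def dofA (n k : ℕ) (T : ℝ) : Set ((Fin n → ℝ) × (Fin k → ℝ)) :=
  {p : (Fin n → ℝ) × (Fin k → ℝ) |
    (∀ j, 0 ≤ p.1 j) ∧ (∀ i, 0 ≤ p.2 i) ∧ (∑ i, p.2 i ≤ 1 - 1/T) ∧
    ((∑ j, p.1 j) + (∑ i, p.2 i) ≤ 1)}

lemma mem_dofA {n k : ℕ} {T : ℝ} {p : (Fin n → ℝ) × (Fin k → ℝ)} :
    p ∈ dofA n k T ↔
      ((∀ j, 0 ≤ p.1 j) ∧ (∀ i, 0 ≤ p.2 i) ∧ (∑ i, p.2 i ≤ 1 - 1/T) ∧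
      ((∑ j, p.1 j) + (∑ i, p.2 i) ≤ 1)) := Iff.rfl

lemma dof_aux_extreme_of_max {E : Type*} [AddCommGroup E] [Module ℝ E] {A : Set E} {p : E}
    (f : E →ₗ[ℝ] ℝ) (hp : p ∈ A) (hmax : ∀ q ∈ A, f q ≤ f p)
    (heq : ∀ q ∈ A, f q = f p → q = p) : p ∈ A.extremePoints ℝ := by
  refine ⟨hp, fun x hx y hy hseg => ?_⟩
  obtain ⟨a, b, ha, hb, hab, hxy⟩ := hseg
  have hsum : a * f x + b * f y = f p := by
    rw [← hxy]; simp [smul_eq_mul]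
  have hfp : a * f p + b * f p = f p := by rw [← add_mul, hab, one_mul]
  have hx' : f x = f p := by
    by_contra hne
    have hlt := mul_lt_mul_of_pos_left (lt_of_le_of_ne (hmax x hx) hne) ha
    have hle := mul_le_mul_of_nonneg_left (hmax y hy) hb.le
    linarith
  have hy' : f y = f p := by
    by_contra hne
    have hlt := mul_lt_mul_of_pos_left (lt_of_le_of_ne (hmax y hy) hne) hb
    have hle := mul_le_mul_of_nonneg_left (hmax x hx) ha.le
    linarith
  exact heq x hx hx'

lemma dof_aux_symm {E : Type*} [AddCommGroup E] [Module ℝ E] {A : Set E} {p : E}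
    (hp : p ∈ A.extremePoints ℝ) {v : E} (h1 : p + v ∈ A) (h2 : p - v ∈ A) : v = 0 := by
  have h := (hp.2 h2 h1 ⟨1/2, 1/2, by norm_num, by norm_num, by norm_num, by module⟩)
  have h' : p - v = p := h
  exact sub_eq_self.mp h'

lemma dof_aux_eq_single {n : ℕ} (g : Fin n → ℝ) (hg : ∀ k, 0 ≤ g k) (j : Fin n)
    (h : ∑ k, g k ≤ g j) : g = Pi.single j (g j) := by
  have hall : ∀ k ∈ Finset.univ.erase j, g k = 0 := by
    rw [← Finset.sum_eq_zero_iff_of_nonneg (fun k _ => hg k)]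
    have h1 := Finset.add_sum_erase Finset.univ g (Finset.mem_univ j)
    have h2 : (0:ℝ) ≤ ∑ k ∈ Finset.univ.erase j, g k :=
      Finset.sum_nonneg (fun k _ => hg k)
    linarith
  funext k
  by_cases hk : k = j
  · subst hk; simp
  · rw [Pi.single_apply, if_neg hk, hall k (Finset.mem_erase.2 ⟨hk, Finset.mem_univ k⟩)]

lemma dof_aux_zero_of_sum {n : ℕ} (g : Fin n → ℝ) (hg : ∀ k, 0 ≤ g k)
    (h : ∑ k, g k = 0) : g = 0 := by
  funext k
  exact (Finset.sum_eq_zero_iff_of_nonneg (fun k _ => hg k)).1 h k (Finset.mem_univ k)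

lemma dof_aux_smul_single {n : ℕ} (i : Fin n) (r : ℝ) :
    r • (Pi.single i 1 : Fin n → ℝ) = Pi.single i r := by
  funext k; simp [Pi.single_apply, mul_ite]

lemma dof_aux_single_inj {n : ℕ} {i i' : Fin n} {r r' : ℝ} (hr : r ≠ 0)
    (h : (Pi.single i r : Fin n → ℝ) = Pi.single i' r') : i = i' ∧ r = r' := by
  have hi := congrFun h i
  rw [Pi.single_apply, Pi.single_apply, if_pos rfl] at hi
  by_cases hii : i = i'
  · subst hii; simp at hi; exact ⟨rfl, hi⟩
  · rw [if_neg hii] at hi; exact absurd hi hr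

lemma dof_neg_single {n : ℕ} (j : Fin n) (α : ℝ) :
    -(Pi.single j α : Fin n → ℝ) = Pi.single j (-α) := by
  funext l; simp only [Pi.neg_apply, Pi.single_apply]; split <;> simp

/-- linear functional with coefficients `c'` on static and `c` on dynamic coordinates. -/
def dofLF {n k : ℕ} (c' : Fin n → ℝ) (c : Fin k → ℝ) :
    ((Fin n → ℝ) × (Fin k → ℝ)) →ₗ[ℝ] ℝ where
  toFun p := (∑ j, c' j * p.1 j) + ∑ i, c i * p.2 i
  map_add' x y := by
    simp only [Prod.fst_add, Prod.snd_add, Pi.add_apply, mul_add, Finset.sum_add_distrib]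
    ring
  map_smul' r x := by
    simp only [Prod.smul_fst, Prod.smul_snd, Pi.smul_apply, smul_eq_mul, RingHom.id_apply,
      mul_add, Finset.mul_sum]
    congr 1 <;> exact Finset.sum_congr rfl (fun y _ => by ring)

@[simp] lemma dofLF_apply {n k : ℕ} (c' : Fin n → ℝ) (c : Fin k → ℝ)
    (p : (Fin n → ℝ) × (Fin k → ℝ)) :
    dofLF c' c p = (∑ j, c' j * p.1 j) + ∑ i, c i * p.2 i := rfl

lemma dof_sum_coef {n : ℕ} (j : Fin n) (cj co : ℝ) (x : Fin n → ℝ) :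
    ∑ k, (if k = j then cj else co) * x k = (cj - co) * x j + co * ∑ k, x k := by
  have h : ∀ k, (if k = j then cj else co) * x k
      = (if k = j then (cj - co) * x k else 0) + co * x k := by
    intro k; split <;> ring
  rw [Finset.sum_congr rfl (fun k _ => h k), Finset.sum_add_distrib,
    Finset.sum_ite_eq' Finset.univ j, if_pos (Finset.mem_univ j), ← Finset.mul_sum]

lemma dof_sum_constc {n : ℕ} (c : ℝ) (x : Fin n → ℝ) :
    ∑ k, c * x k = c * ∑ k, x k := by rw [Finset.mul_sum]

-- perturbation helpers
lemma dof_mem_perturb1 {n k : ℕ} {T : ℝ} {p : (Fin n → ℝ) × (Fin k → ℝ)}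
    (hp : p ∈ dofA n k T) (j : Fin n) (i : Fin k) (α β : ℝ)
    (hj : 0 ≤ p.1 j + α) (hi : 0 ≤ p.2 i + β)
    (h3 : (∑ l, p.2 l) + β ≤ 1 - 1/T)
    (h4 : ((∑ l, p.1 l) + α) + ((∑ l, p.2 l) + β) ≤ 1) :
    p + ((Pi.single j α : Fin n → ℝ), (Pi.single i β : Fin k → ℝ)) ∈ dofA n k T := by
  obtain ⟨g1, g2, g3, g4⟩ := hp
  rw [mem_dofA]
  refine ⟨fun l => ?_, fun l => ?_, ?_, ?_⟩
  · simp only [Prod.fst_add, Pi.add_apply, Pi.single_apply]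
    rcases eq_or_ne l j with rfl | hl
    · rw [if_pos rfl]; exact hj
    · rw [if_neg hl, add_zero]; exact g1 l
  · simp only [Prod.snd_add, Pi.add_apply, Pi.single_apply]
    rcases eq_or_ne l i with rfl | hl
    · rw [if_pos rfl]; exact hi
    · rw [if_neg hl, add_zero]; exact g2 l
  · simp only [Prod.snd_add, Pi.add_apply, Finset.sum_add_distrib, Fintype.sum_pi_single']
    exact h3
  · simp only [Prod.fst_add, Prod.snd_add, Pi.add_apply, Finset.sum_add_distrib,
      Fintype.sum_pi_single']
    linarith

lemma dof_mem_perturb2 {n k : ℕ} {T : ℝ} {p : (Fin n → ℝ) × (Fin k → ℝ)}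
    (hp : p ∈ dofA n k T) {j j' : Fin n} (hjj : j ≠ j') (α α' : ℝ)
    (hj : 0 ≤ p.1 j + α) (hj' : 0 ≤ p.1 j' + α')
    (h4 : ((∑ l, p.1 l) + (α + α')) + (∑ l, p.2 l) ≤ 1) :
    p + ((Pi.single j α + Pi.single j' α' : Fin n → ℝ), (0 : Fin k → ℝ)) ∈ dofA n k T := by
  obtain ⟨g1, g2, g3, g4⟩ := hp
  rw [mem_dofA]
  refine ⟨fun l => ?_, fun l => ?_, ?_, ?_⟩
  · simp only [Prod.fst_add, Pi.add_apply, Pi.single_apply]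
    rcases eq_or_ne l j with rfl | hl
    · rw [if_pos rfl, if_neg hjj, add_zero]; exact hj
    · rw [if_neg hl, zero_add]
      rcases eq_or_ne l j' with rfl | hl'
      · rw [if_pos rfl]; exact hj'
      · rw [if_neg hl', add_zero]; exact g1 l
  · simp only [Prod.snd_add, Pi.add_apply, Pi.zero_apply, add_zero]
    exact g2 l
  · simp only [Prod.snd_add, Pi.add_apply, Pi.zero_apply, add_zero]
    exact g3
  · simp only [Prod.fst_add, Prod.snd_add, Pi.add_apply, Pi.zero_apply, add_zero,
      Finset.sum_add_distrib, Fintype.sum_pi_single']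
    linarith

lemma dof_mem_perturb3 {n k : ℕ} {T : ℝ} {p : (Fin n → ℝ) × (Fin k → ℝ)}
    (hp : p ∈ dofA n k T) {i i' : Fin k} (hii : i ≠ i') (β β' : ℝ)
    (hi : 0 ≤ p.2 i + β) (hi' : 0 ≤ p.2 i' + β')
    (h3 : (∑ l, p.2 l) + (β + β') ≤ 1 - 1/T)
    (h4 : (∑ l, p.1 l) + ((∑ l, p.2 l) + (β + β')) ≤ 1) :
    p + ((0 : Fin n → ℝ), (Pi.single i β + Pi.single i' β' : Fin k → ℝ)) ∈ dofA n k T := by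
  obtain ⟨g1, g2, g3, g4⟩ := hp
  rw [mem_dofA]
  refine ⟨fun l => ?_, fun l => ?_, ?_, ?_⟩
  · simp only [Prod.fst_add, Pi.add_apply, Pi.zero_apply, add_zero]
    exact g1 l
  · simp only [Prod.snd_add, Pi.add_apply, Pi.single_apply]
    rcases eq_or_ne l i with rfl | hl
    · rw [if_pos rfl, if_neg hii, add_zero]; exact hi
    · rw [if_neg hl, zero_add]
      rcases eq_or_ne l i' with rfl | hl'
      · rw [if_pos rfl]; exact hi'
      · rw [if_neg hl', add_zero]; exact g2 l
  · simp only [Prod.snd_add, Pi.add_apply, Finset.sum_add_distrib, Fintype.sum_pi_single']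
    linarith
  · simp only [Prod.fst_add, Prod.snd_add, Pi.add_apply, Pi.zero_apply, add_zero,
      Finset.sum_add_distrib, Fintype.sum_pi_single']
    linarith

lemma dof_sub_pair1 {n k : ℕ} (p : (Fin n → ℝ) × (Fin k → ℝ)) (j : Fin n) (i : Fin k)
    (α β : ℝ) :
    p - ((Pi.single j α : Fin n → ℝ), (Pi.single i β : Fin k → ℝ))
      = p + ((Pi.single j (-α) : Fin n → ℝ), (Pi.single i (-β) : Fin k → ℝ)) := by
  rw [sub_eq_add_neg, Prod.neg_mk, dof_neg_single, dof_neg_single]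

lemma dof_sub_pair2 {n k : ℕ} (p : (Fin n → ℝ) × (Fin k → ℝ)) (j j' : Fin n) (α α' : ℝ) :
    p - ((Pi.single j α + Pi.single j' α' : Fin n → ℝ), (0 : Fin k → ℝ))
      = p + ((Pi.single j (-α) + Pi.single j' (-α') : Fin n → ℝ), (0 : Fin k → ℝ)) := by
  rw [sub_eq_add_neg, Prod.neg_mk, neg_add, dof_neg_single, dof_neg_single, neg_zero]

lemma dof_sub_pair3 {n k : ℕ} (p : (Fin n → ℝ) × (Fin k → ℝ)) (i i' : Fin k) (β β' : ℝ) :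
    p - ((0 : Fin n → ℝ), (Pi.single i β + Pi.single i' β' : Fin k → ℝ))
      = p + ((0 : Fin n → ℝ), (Pi.single i (-β) + Pi.single i' (-β') : Fin k → ℝ)) := by
  rw [sub_eq_add_neg, Prod.neg_mk, neg_add, dof_neg_single, dof_neg_single, neg_zero]

end DofAux

section DofVert

def dofS (m' m : ℕ) (T : ℝ) : Set ((Fin m' → ℝ) × (Fin m → ℝ)) :=
  (({((0 : Fin m' → ℝ), (0 : Fin m → ℝ))} ∪
    (⋃ j : Fin m', {((Pi.single j 1 : Fin m' → ℝ), (0 : Fin m → ℝ))}) ∪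
    (⋃ i : Fin m, {((0 : Fin m' → ℝ), (1 - 1/T) • (Pi.single i 1 : Fin m → ℝ))}) ∪
    (⋃ j : Fin m', ⋃ i : Fin m,
      {((1/T) • (Pi.single j 1 : Fin m' → ℝ),
        (1 - 1/T) • (Pi.single i 1 : Fin m → ℝ))})) :
    Set ((Fin m' → ℝ) × (Fin m → ℝ)))

noncomputable def dofVert (m' m : ℕ) (T : ℝ) :
    Option (Fin m') × Option (Fin m) → (Fin m' → ℝ) × (Fin m → ℝ)
  | (none, none) => (0, 0)
  | (some j, none) => ((Pi.single j 1 : Fin m' → ℝ), 0)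
  | (none, some i) => (0, (1 - 1/T) • (Pi.single i 1 : Fin m → ℝ))
  | (some j, some i) => ((1/T) • (Pi.single j 1 : Fin m' → ℝ),
      (1 - 1/T) • (Pi.single i 1 : Fin m → ℝ))

lemma dofVert_injective (m' m : ℕ) (T : ℝ) (hT : 1 < T) :
    Function.Injective (dofVert m' m T) := by
  have hT0 : (0:ℝ) < T := lt_trans one_pos hT
  have ha : (0:ℝ) < 1/T := by positivity
  have ha1 : 1/T < 1 := by rw [div_lt_one hT0]; exact hT
  have hb : (0:ℝ) < 1 - 1/T := by linarith
  have hz : ∀ (n : ℕ) (i : Fin n) (r : ℝ), (Pi.single i r : Fin n → ℝ) = 0 → r = 0 := by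
    intro n i r h
    have := congrFun h i
    simpa using this
  rintro ⟨(_|j), (_|i)⟩ ⟨(_|j'), (_|i')⟩ h <;>
    simp only [dofVert, dof_aux_smul_single, Prod.mk.injEq] at h
  · rfl
  · exact absurd (hz _ _ _ h.2.symm) hb.ne'
  · exact absurd (hz _ _ _ h.1.symm) one_ne_zero
  · exact absurd (hz _ _ _ h.1.symm) ha.ne'
  · exact absurd (hz _ _ _ h.2) hb.ne'
  · obtain ⟨hi, hr⟩ := dof_aux_single_inj hb.ne' h.2
    rw [hi]
  · exact absurd (hz _ _ _ h.1.symm) one_ne_zero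
  · exact absurd (hz _ _ _ h.1.symm) ha.ne'
  · exact absurd (hz _ _ _ h.1) one_ne_zero
  · exact absurd (hz _ _ _ h.1) one_ne_zero
  · obtain ⟨hj, hr⟩ := dof_aux_single_inj one_ne_zero h.1
    rw [hj]
  · obtain ⟨hj, hr⟩ := dof_aux_single_inj one_ne_zero h.1
    exact absurd hr.symm ha1.ne
  · exact absurd (hz _ _ _ h.1) ha.ne'
  · exact absurd (hz _ _ _ h.1) ha.ne'
  · obtain ⟨hj, hr⟩ := dof_aux_single_inj ha.ne' h.1
    exact absurd hr ha1.ne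
  · obtain ⟨hj, _⟩ := dof_aux_single_inj ha.ne' h.1
    obtain ⟨hi, _⟩ := dof_aux_single_inj hb.ne' h.2
    rw [hj, hi]

lemma dofS_eq_range (m' m : ℕ) (T : ℝ) :
    dofS m' m T = Set.range (dofVert m' m T) := by
  ext q
  simp only [dofS, Set.mem_union, Set.mem_iUnion, Set.mem_singleton_iff, Set.mem_range]
  constructor
  · rintro (((h | ⟨j, h⟩) | ⟨i, h⟩) | ⟨j, i, h⟩)
    exacts [⟨(none, none), h.symm⟩, ⟨(some j, none), h.symm⟩,
      ⟨(none, some i), h.symm⟩, ⟨(some j, some i), h.symm⟩]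
  · rintro ⟨⟨(_|j), (_|i)⟩, rfl⟩
    · exact Or.inl (Or.inl (Or.inl rfl))
    · exact Or.inl (Or.inr ⟨i, rfl⟩)
    · exact Or.inl (Or.inl (Or.inr ⟨j, rfl⟩))
    · exact Or.inr ⟨j, i, rfl⟩

lemma dofS_ncard (m' m : ℕ) (T : ℝ) (hT : 1 < T) :
    (dofS m' m T).ncard = (m' + 1) * (m + 1) := by
  rw [dofS_eq_range m' m T, ← Set.image_univ,
    Set.ncard_image_of_injective _ (dofVert_injective m' m T hT), Set.ncard_univ,
    Nat.card_eq_fintype_card]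
  simp [Fintype.card_option]

end DofVert

section DofExtreme

lemma dof_ext0 (m' m : ℕ) (T : ℝ) (hT : 1 < T) :
    ((0 : Fin m' → ℝ), (0 : Fin m → ℝ)) ∈ Set.extremePoints ℝ (dofA m' m T) := by
  have hT0 : (0:ℝ) < T := lt_trans one_pos hT
  have ha : (0:ℝ) < T⁻¹ := inv_pos.2 hT0
  have ha1 : T⁻¹ < 1 := by rw [← one_div, div_lt_one hT0]; exact hT
  apply dof_aux_extreme_of_max (dofLF (fun _ => (-1:ℝ)) (fun _ => (-1:ℝ)))
  · rw [mem_dofA]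
    simp only [one_div]
    refine ⟨fun j => le_rfl, fun i => le_rfl, ?_, ?_⟩ <;> simp <;> linarith
  · intro q hq
    rw [mem_dofA] at hq
    obtain ⟨g1, g2, g3, g4⟩ := hq
    have k1 : (0:ℝ) ≤ ∑ l, q.1 l := Finset.sum_nonneg fun l _ => g1 l
    have k2 : (0:ℝ) ≤ ∑ l, q.2 l := Finset.sum_nonneg fun l _ => g2 l
    simp only [dofLF_apply, dof_sum_constc, Pi.zero_apply, Finset.sum_const_zero]
    norm_num
    linarith
  · intro q hq hf
    rw [mem_dofA] at hq
    obtain ⟨g1, g2, g3, g4⟩ := hq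
    have k1 : (0:ℝ) ≤ ∑ l, q.1 l := Finset.sum_nonneg fun l _ => g1 l
    have k2 : (0:ℝ) ≤ ∑ l, q.2 l := Finset.sum_nonneg fun l _ => g2 l
    simp only [dofLF_apply, dof_sum_constc, Pi.zero_apply, Finset.sum_const_zero] at hf
    norm_num at hf
    have e1 : ∑ l, q.1 l = 0 := by linarith
    have e2 : ∑ l, q.2 l = 0 := by linarith
    exact Prod.ext_iff.2 ⟨dof_aux_zero_of_sum q.1 g1 e1, dof_aux_zero_of_sum q.2 g2 e2⟩

lemma dof_ext1 (m' m : ℕ) (T : ℝ) (hT : 1 < T) (j : Fin m') :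
    ((Pi.single j 1 : Fin m' → ℝ), (0 : Fin m → ℝ)) ∈ Set.extremePoints ℝ (dofA m' m T) := by
  have hT0 : (0:ℝ) < T := lt_trans one_pos hT
  have ha : (0:ℝ) < T⁻¹ := inv_pos.2 hT0
  have ha1 : T⁻¹ < 1 := by rw [← one_div, div_lt_one hT0]; exact hT
  apply dof_aux_extreme_of_max (dofLF (fun k => if k = j then 2 else 1) (fun _ => (1:ℝ)))
  · rw [mem_dofA]
    simp only [one_div]
    refine ⟨fun k => ?_, fun i => le_rfl, ?_, ?_⟩
    · simp only [Pi.single_apply]; split <;> norm_num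
    · simp; linarith
    · simp [Fintype.sum_pi_single']
  · intro q hq
    rw [mem_dofA] at hq
    obtain ⟨g1, g2, g3, g4⟩ := hq
    rw [one_div] at g3
    have k2 : (0:ℝ) ≤ ∑ l, q.2 l := Finset.sum_nonneg fun l _ => g2 l
    have kj : q.1 j ≤ ∑ l, q.1 l := Finset.single_le_sum (fun l _ => g1 l) (Finset.mem_univ j)
    simp only [dofLF_apply, dof_sum_coef, dof_sum_constc, Pi.zero_apply,
      Finset.sum_const_zero, Pi.single_eq_same, Fintype.sum_pi_single']
    norm_num
    linarith
  · intro q hq hf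
    rw [mem_dofA] at hq
    obtain ⟨g1, g2, g3, g4⟩ := hq
    rw [one_div] at g3
    have k2 : (0:ℝ) ≤ ∑ l, q.2 l := Finset.sum_nonneg fun l _ => g2 l
    have kj : q.1 j ≤ ∑ l, q.1 l := Finset.single_le_sum (fun l _ => g1 l) (Finset.mem_univ j)
    simp only [dofLF_apply, dof_sum_coef, dof_sum_constc, Pi.zero_apply,
      Finset.sum_const_zero, Pi.single_eq_same, Fintype.sum_pi_single'] at hf
    norm_num at hf
    have e1 : q.1 j = 1 := by linarith
    have e2 : ∑ l, q.2 l = 0 := by linarith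
    have e3 : ∑ l, q.1 l ≤ q.1 j := by linarith
    have hq1 : q.1 = Pi.single j 1 := by
      have := dof_aux_eq_single q.1 g1 j e3
      rwa [e1] at this
    exact Prod.ext_iff.2 ⟨hq1, dof_aux_zero_of_sum q.2 g2 e2⟩

lemma dof_ext2 (m' m : ℕ) (T : ℝ) (hT : 1 < T) (i : Fin m) :
    ((0 : Fin m' → ℝ), (1 - 1/T) • (Pi.single i 1 : Fin m → ℝ)) ∈
      Set.extremePoints ℝ (dofA m' m T) := by
  have hT0 : (0:ℝ) < T := lt_trans one_pos hT
  have ha : (0:ℝ) < T⁻¹ := inv_pos.2 hT0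
  have ha1 : T⁻¹ < 1 := by rw [← one_div, div_lt_one hT0]; exact hT
  have hb : (0:ℝ) < 1 - T⁻¹ := by linarith
  rw [dof_aux_smul_single]
  simp only [one_div]
  apply dof_aux_extreme_of_max (dofLF (fun _ => (-1:ℝ)) (fun l => if l = i then 2 else 1))
  · rw [mem_dofA]
    simp only [one_div]
    refine ⟨fun k => le_rfl, fun k => ?_, ?_, ?_⟩
    · simp only [Pi.single_apply]; split <;> simp [hb.le]
    · simp [Fintype.sum_pi_single']
    · simp [Fintype.sum_pi_single']; linarith
  · intro q hq
    rw [mem_dofA] at hq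
    obtain ⟨g1, g2, g3, g4⟩ := hq
    rw [one_div] at g3
    have k1 : (0:ℝ) ≤ ∑ l, q.1 l := Finset.sum_nonneg fun l _ => g1 l
    have ki : q.2 i ≤ ∑ l, q.2 l := Finset.single_le_sum (fun l _ => g2 l) (Finset.mem_univ i)
    simp only [dofLF_apply, dof_sum_coef, dof_sum_constc, Pi.zero_apply,
      Finset.sum_const_zero, Pi.single_eq_same, Fintype.sum_pi_single']
    norm_num
    linarith
  · intro q hq hf
    rw [mem_dofA] at hq
    obtain ⟨g1, g2, g3, g4⟩ := hq
    rw [one_div] at g3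
    have k1 : (0:ℝ) ≤ ∑ l, q.1 l := Finset.sum_nonneg fun l _ => g1 l
    have ki : q.2 i ≤ ∑ l, q.2 l := Finset.single_le_sum (fun l _ => g2 l) (Finset.mem_univ i)
    simp only [dofLF_apply, dof_sum_coef, dof_sum_constc, Pi.zero_apply,
      Finset.sum_const_zero, Pi.single_eq_same, Fintype.sum_pi_single'] at hf
    norm_num at hf
    have e1 : ∑ l, q.1 l = 0 := by linarith
    have e2 : q.2 i = 1 - T⁻¹ := by linarith
    have e3 : ∑ l, q.2 l ≤ q.2 i := by linarith
    have hq2 : q.2 = Pi.single i (1 - T⁻¹) := by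
      have := dof_aux_eq_single q.2 g2 i e3
      rwa [e2] at this
    exact Prod.ext_iff.2 ⟨dof_aux_zero_of_sum q.1 g1 e1, hq2⟩

lemma dof_ext3 (m' m : ℕ) (T : ℝ) (hT : 1 < T) (j : Fin m') (i : Fin m) :
    ((1/T) • (Pi.single j 1 : Fin m' → ℝ), (1 - 1/T) • (Pi.single i 1 : Fin m → ℝ)) ∈
      Set.extremePoints ℝ (dofA m' m T) := by
  have hT0 : (0:ℝ) < T := lt_trans one_pos hT
  have ha : (0:ℝ) < T⁻¹ := inv_pos.2 hT0
  have ha1 : T⁻¹ < 1 := by rw [← one_div, div_lt_one hT0]; exact hT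
  have hb : (0:ℝ) < 1 - T⁻¹ := by linarith
  rw [dof_aux_smul_single, dof_aux_smul_single]
  simp only [one_div]
  apply dof_aux_extreme_of_max
    (dofLF (fun k => if k = j then 2 else 1) (fun l => if l = i then 3 else 2))
  · rw [mem_dofA]
    simp only [one_div]
    refine ⟨fun k => ?_, fun k => ?_, ?_, ?_⟩
    · simp only [Pi.single_apply]; split <;> simp [ha.le]
    · simp only [Pi.single_apply]; split <;> simp [hb.le]
    · simp [Fintype.sum_pi_single']
    · simp [Fintype.sum_pi_single']
  · intro q hq
    rw [mem_dofA] at hq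
    obtain ⟨g1, g2, g3, g4⟩ := hq
    rw [one_div] at g3
    have kj : q.1 j ≤ ∑ l, q.1 l := Finset.single_le_sum (fun l _ => g1 l) (Finset.mem_univ j)
    have ki : q.2 i ≤ ∑ l, q.2 l := Finset.single_le_sum (fun l _ => g2 l) (Finset.mem_univ i)
    simp only [dofLF_apply, dof_sum_coef, dof_sum_constc, Pi.single_eq_same,
      Fintype.sum_pi_single']
    norm_num
    linarith
  · intro q hq hf
    rw [mem_dofA] at hq
    obtain ⟨g1, g2, g3, g4⟩ := hq
    rw [one_div] at g3
    have kj : q.1 j ≤ ∑ l, q.1 l := Finset.single_le_sum (fun l _ => g1 l) (Finset.mem_univ j)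
    have ki : q.2 i ≤ ∑ l, q.2 l := Finset.single_le_sum (fun l _ => g2 l) (Finset.mem_univ i)
    simp only [dofLF_apply, dof_sum_coef, dof_sum_constc, Pi.single_eq_same,
      Fintype.sum_pi_single'] at hf
    norm_num at hf
    have e1 : q.1 j = ∑ l, q.1 l := by linarith
    have e2 : q.2 i = ∑ l, q.2 l := by linarith
    have e3 : ∑ l, q.2 l = 1 - T⁻¹ := by linarith
    have e4 : ∑ l, q.1 l = T⁻¹ := by linarith
    have hq1 : q.1 = Pi.single j T⁻¹ := by
      have := dof_aux_eq_single q.1 g1 j (le_of_eq e1.symm)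
      rwa [e1, e4] at this
    have hq2 : q.2 = Pi.single i (1 - T⁻¹) := by
      have := dof_aux_eq_single q.2 g2 i (le_of_eq e2.symm)
      rwa [e2, e3] at this
    exact Prod.ext_iff.2 ⟨hq1, hq2⟩

end DofExtreme

section DofForward

lemma dof_forward (m' m : ℕ) (hm' : 1 ≤ m') (hm : 1 ≤ m) (T : ℝ) (hT : 1 < T) :
    Set.extremePoints ℝ (dofA m' m T) ⊆ dofS m' m T := by
  have hT0 : (0:ℝ) < T := lt_trans one_pos hT
  have ha : (0:ℝ) < 1/T := by positivity
  have ha1 : 1/T < 1 := by rw [div_lt_one hT0]; exact hT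
  have hb : (0:ℝ) < 1 - 1/T := by linarith
  intro p hp
  obtain ⟨h1, h2, h3, h4⟩ := hp.1
  have hs1 : (0:ℝ) ≤ ∑ l, p.1 l := Finset.sum_nonneg fun l _ => h1 l
  have hs2 : (0:ℝ) ≤ ∑ l, p.2 l := Finset.sum_nonneg fun l _ => h2 l
  -- at most one positive static coordinate
  have hst : ∀ j k : Fin m', j ≠ k → p.1 j = 0 ∨ p.1 k = 0 := by
    intro j k hjk
    by_contra hc
    push_neg at hc
    have hj' : 0 < p.1 j := (h1 j).lt_of_ne (Ne.symm hc.1)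
    have hk' : 0 < p.1 k := (h1 k).lt_of_ne (Ne.symm hc.2)
    set ε := min (p.1 j) (p.1 k) with hε
    have hε0 : 0 < ε := lt_min hj' hk'
    have hεj : ε ≤ p.1 j := min_le_left _ _
    have hεk : ε ≤ p.1 k := min_le_right _ _
    have hmem1 := dof_mem_perturb2 hp.1 hjk ε (-ε) (by linarith) (by linarith) (by linarith)
    have hmem2 := dof_mem_perturb2 hp.1 hjk (-ε) ε (by linarith) (by linarith) (by linarith)
    have hv := dof_aux_symm hp hmem1 (by rw [dof_sub_pair2, neg_neg]; exact hmem2)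
    have hcon := congrFun (congrArg Prod.fst hv) j
    have : ε = 0 := by simpa [Pi.single_apply, hjk] using hcon
    exact hε0.ne' this
  -- at most one positive dynamic coordinate
  have hdy : ∀ i k : Fin m, i ≠ k → p.2 i = 0 ∨ p.2 k = 0 := by
    intro i k hik
    by_contra hc
    push_neg at hc
    have hi' : 0 < p.2 i := (h2 i).lt_of_ne (Ne.symm hc.1)
    have hk' : 0 < p.2 k := (h2 k).lt_of_ne (Ne.symm hc.2)
    set ε := min (p.2 i) (p.2 k) with hε
    have hε0 : 0 < ε := lt_min hi' hk'
    have hεi : ε ≤ p.2 i := min_le_left _ _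
    have hεk : ε ≤ p.2 k := min_le_right _ _
    have hmem1 := dof_mem_perturb3 hp.1 hik ε (-ε) (by linarith) (by linarith)
      (by linarith) (by linarith)
    have hmem2 := dof_mem_perturb3 hp.1 hik (-ε) ε (by linarith) (by linarith)
      (by linarith) (by linarith)
    have hv := dof_aux_symm hp hmem1 (by rw [dof_sub_pair3, neg_neg]; exact hmem2)
    have hcon := congrFun (congrArg Prod.snd hv) i
    have : ε = 0 := by simpa [Pi.single_apply, hik] using hcon
    exact hε0.ne' this
  -- a positive static coordinate forces the total constraint tight
  have hS1 : ∀ j : Fin m', p.1 j = 0 ∨ (∑ l, p.1 l) + (∑ l, p.2 l) = 1 := by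
    intro j
    by_contra hc
    push_neg at hc
    have hj' : 0 < p.1 j := (h1 j).lt_of_ne (Ne.symm hc.1)
    have htot : (∑ l, p.1 l) + (∑ l, p.2 l) < 1 := lt_of_le_of_ne h4 hc.2
    set ε := min (p.1 j) (1 - ((∑ l, p.1 l) + (∑ l, p.2 l))) with hε
    have hε0 : 0 < ε := lt_min hj' (by linarith)
    have hεj : ε ≤ p.1 j := min_le_left _ _
    have hεt : ε ≤ 1 - ((∑ l, p.1 l) + (∑ l, p.2 l)) := min_le_right _ _
    have hmem1 := dof_mem_perturb1 hp.1 j ⟨0, hm⟩ ε 0 (by linarith)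
      (by linarith [h2 (⟨0, hm⟩ : Fin m)]) (by linarith) (by linarith)
    have hmem2 := dof_mem_perturb1 hp.1 j ⟨0, hm⟩ (-ε) 0 (by linarith)
      (by linarith [h2 (⟨0, hm⟩ : Fin m)]) (by linarith) (by linarith)
    have hv := dof_aux_symm hp hmem1 (by rw [dof_sub_pair1, neg_zero]; exact hmem2)
    have hcon := congrFun (congrArg Prod.fst hv) j
    have : ε = 0 := by simpa [Pi.single_apply] using hcon
    exact hε0.ne' this
  -- a positive dynamic coordinate forces one of the sum constraints tight
  have hS2 : ∀ i : Fin m, p.2 i = 0 ∨ (∑ l, p.2 l) = 1 - 1/T ∨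
      (∑ l, p.1 l) + (∑ l, p.2 l) = 1 := by
    intro i
    by_contra hc
    push_neg at hc
    have hi' : 0 < p.2 i := (h2 i).lt_of_ne (Ne.symm hc.1)
    have hd : (∑ l, p.2 l) < 1 - 1/T := lt_of_le_of_ne h3 hc.2.1
    have htot : (∑ l, p.1 l) + (∑ l, p.2 l) < 1 := lt_of_le_of_ne h4 hc.2.2
    set ε := min (p.2 i) (min ((1 - 1/T) - ∑ l, p.2 l)
      (1 - ((∑ l, p.1 l) + (∑ l, p.2 l)))) with hε
    have hε0 : 0 < ε := lt_min hi' (lt_min (by linarith) (by linarith))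
    have hεi : ε ≤ p.2 i := min_le_left _ _
    have hεd : ε ≤ (1 - 1/T) - ∑ l, p.2 l := le_trans (min_le_right _ _) (min_le_left _ _)
    have hεt : ε ≤ 1 - ((∑ l, p.1 l) + (∑ l, p.2 l)) :=
      le_trans (min_le_right _ _) (min_le_right _ _)
    have hmem1 := dof_mem_perturb1 hp.1 ⟨0, hm'⟩ i 0 ε
      (by linarith [h1 (⟨0, hm'⟩ : Fin m')]) (by linarith) (by linarith) (by linarith)
    have hmem2 := dof_mem_perturb1 hp.1 ⟨0, hm'⟩ i 0 (-ε)
      (by linarith [h1 (⟨0, hm'⟩ : Fin m')]) (by linarith) (by linarith) (by linarith)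
    have hv := dof_aux_symm hp hmem1 (by rw [dof_sub_pair1, neg_zero]; exact hmem2)
    have hcon := congrFun (congrArg Prod.snd hv) i
    have : ε = 0 := by simpa [Pi.single_apply] using hcon
    exact hε0.ne' this
  -- simultaneously positive static and dynamic coordinates force the dynamic bound tight
  have hS3 : ∀ (j : Fin m') (i : Fin m), p.1 j = 0 ∨ p.2 i = 0 ∨
      (∑ l, p.2 l) = 1 - 1/T := by
    intro j i
    by_contra hc
    push_neg at hc
    have hj' : 0 < p.1 j := (h1 j).lt_of_ne (Ne.symm hc.1)
    have hi' : 0 < p.2 i := (h2 i).lt_of_ne (Ne.symm hc.2.1)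
    have hd : (∑ l, p.2 l) < 1 - 1/T := lt_of_le_of_ne h3 hc.2.2
    set ε := min (p.1 j) (min (p.2 i) ((1 - 1/T) - ∑ l, p.2 l)) with hε
    have hε0 : 0 < ε := lt_min hj' (lt_min hi' (by linarith))
    have hεj : ε ≤ p.1 j := min_le_left _ _
    have hεi : ε ≤ p.2 i := le_trans (min_le_right _ _) (min_le_left _ _)
    have hεd : ε ≤ (1 - 1/T) - ∑ l, p.2 l := le_trans (min_le_right _ _) (min_le_right _ _)
    have hmem1 := dof_mem_perturb1 hp.1 j i (-ε) ε (by linarith) (by linarith)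
      (by linarith) (by linarith)
    have hmem2 := dof_mem_perturb1 hp.1 j i ε (-ε) (by linarith) (by linarith)
      (by linarith) (by linarith)
    have hv := dof_aux_symm hp hmem1 (by rw [dof_sub_pair1, neg_neg]; exact hmem2)
    have hcon := congrFun (congrArg Prod.snd hv) i
    have : ε = 0 := by simpa [Pi.single_apply] using hcon
    exact hε0.ne' this
  -- final case analysis
  simp only [dofS, Set.mem_union, Set.mem_iUnion, Set.mem_singleton_iff]
  by_cases hdyn : ∀ i, p.2 i = 0
  · have hp2 : p.2 = 0 := funext hdyn
    have hsum2 : ∑ i, p.2 i = 0 := by rw [hp2]; simp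
    by_cases hstat : ∀ j, p.1 j = 0
    · exact Or.inl (Or.inl (Or.inl (Prod.ext_iff.2 ⟨funext hstat, hp2⟩)))
    · push_neg at hstat
      obtain ⟨j, hj⟩ := hstat
      have htot := (hS1 j).resolve_left hj
      have hzrest : ∀ k, k ≠ j → p.1 k = 0 := fun k hk =>
        (hst j k (Ne.symm hk)).resolve_left hj
      have hsum1 : ∑ l, p.1 l = p.1 j :=
        Finset.sum_eq_single j (fun k _ hk => hzrest k hk)
          (fun h => absurd (Finset.mem_univ j) h)
      have hj1 : p.1 j = 1 := by rw [hsum1, hsum2] at htot; linarith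
      have hp1 : p.1 = Pi.single j 1 := by
        have := dof_aux_eq_single p.1 h1 j (le_of_eq hsum1)
        rwa [hj1] at this
      exact Or.inl (Or.inl (Or.inr ⟨j, Prod.ext_iff.2 ⟨hp1, hp2⟩⟩))
  · push_neg at hdyn
    obtain ⟨i, hi⟩ := hdyn
    have hi' : 0 < p.2 i := (h2 i).lt_of_ne (Ne.symm hi)
    have hzrest2 : ∀ k, k ≠ i → p.2 k = 0 := fun k hk =>
      (hdy i k (Ne.symm hk)).resolve_left hi
    have hsum2 : ∑ l, p.2 l = p.2 i :=
      Finset.sum_eq_single i (fun k _ hk => hzrest2 k hk)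
        (fun h => absurd (Finset.mem_univ i) h)
    by_cases hstat : ∀ j, p.1 j = 0
    · have hp1 : p.1 = 0 := funext hstat
      have hsum1 : ∑ l, p.1 l = 0 := by rw [hp1]; simp
      have hd : ∑ l, p.2 l = 1 - 1/T := by
        rcases (hS2 i).resolve_left hi with h | h
        · exact h
        · exfalso; rw [hsum1] at h; linarith
      have hib : p.2 i = 1 - 1/T := by rw [← hsum2]; exact hd
      have hp2 : p.2 = (1 - 1/T) • (Pi.single i 1 : Fin m → ℝ) := by
        rw [dof_aux_smul_single]
        have := dof_aux_eq_single p.2 h2 i (le_of_eq hsum2)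
        rwa [hib] at this
      exact Or.inl (Or.inr ⟨i, Prod.ext_iff.2 ⟨hp1, hp2⟩⟩)
    · push_neg at hstat
      obtain ⟨j, hj⟩ := hstat
      have hzrest1 : ∀ k, k ≠ j → p.1 k = 0 := fun k hk =>
        (hst j k (Ne.symm hk)).resolve_left hj
      have hsum1 : ∑ l, p.1 l = p.1 j :=
        Finset.sum_eq_single j (fun k _ hk => hzrest1 k hk)
          (fun h => absurd (Finset.mem_univ j) h)
      have hd : ∑ l, p.2 l = 1 - 1/T :=
        ((hS3 j i).resolve_left hj).resolve_left hi
      have htot := (hS1 j).resolve_left hj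
      have hja : p.1 j = 1/T := by rw [hsum1, hd] at htot; linarith
      have hib : p.2 i = 1 - 1/T := by rw [← hsum2]; exact hd
      have hp1 : p.1 = (1/T) • (Pi.single j 1 : Fin m' → ℝ) := by
        rw [dof_aux_smul_single]
        have := dof_aux_eq_single p.1 h1 j (le_of_eq hsum1)
        rwa [hja] at this
      have hp2 : p.2 = (1 - 1/T) • (Pi.single i 1 : Fin m → ℝ) := by
        rw [dof_aux_smul_single]
        have := dof_aux_eq_single p.2 h2 i (le_of_eq hsum2)
        rwa [hib] at this
      exact Or.inr ⟨j, i, Prod.ext_iff.2 ⟨hp1, hp2⟩⟩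

end DofForward

/-- The extreme points of the no-CSIT achievable degrees-of-freedom polytope
are exactly the origin, the static unit vectors, the scaled dynamic unit vectors, and the
product-superposition points, and there are exactly `(m'+1) * (m+1)` of them. -/
theorem dof_region_extremePoints (m' m : ℕ) (hm' : 1 ≤ m') (hm : 1 ≤ m)
    (T : ℝ) (hT : 1 < T) :
    Set.extremePoints ℝ
      {p : (Fin m' → ℝ) × (Fin m → ℝ) |
        (∀ j, 0 ≤ p.1 j) ∧ (∀ i, 0 ≤ p.2 i) ∧ (∑ i, p.2 i ≤ 1 - 1/T) ∧
        ((∑ j, p.1 j) + (∑ i, p.2 i) ≤ 1)} =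
      (({((0 : Fin m' → ℝ), (0 : Fin m → ℝ))} ∪
        (⋃ j : Fin m', {((Pi.single j 1 : Fin m' → ℝ), (0 : Fin m → ℝ))}) ∪
        (⋃ i : Fin m, {((0 : Fin m' → ℝ), (1 - 1/T) • (Pi.single i 1 : Fin m → ℝ))}) ∪
        (⋃ j : Fin m', ⋃ i : Fin m,
          {((1/T) • (Pi.single j 1 : Fin m' → ℝ),
            (1 - 1/T) • (Pi.single i 1 : Fin m → ℝ))})) :
        Set ((Fin m' → ℝ) × (Fin m → ℝ)))
    ∧
    (({((0 : Fin m' → ℝ), (0 : Fin m → ℝ))} ∪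
        (⋃ j : Fin m', {((Pi.single j 1 : Fin m' → ℝ), (0 : Fin m → ℝ))}) ∪
        (⋃ i : Fin m, {((0 : Fin m' → ℝ), (1 - 1/T) • (Pi.single i 1 : Fin m → ℝ))}) ∪
        (⋃ j : Fin m', ⋃ i : Fin m,
          {((1/T) • (Pi.single j 1 : Fin m' → ℝ),
            (1 - 1/T) • (Pi.single i 1 : Fin m → ℝ))})) :
        Set ((Fin m' → ℝ) × (Fin m → ℝ))).ncard = (m' + 1) * (m + 1) := by
  constructor
  · show Set.extremePoints ℝ (dofA m' m T) = dofS m' m T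
    apply Set.Subset.antisymm (dof_forward m' m hm' hm T hT)
    intro p hpS
    simp only [dofS, Set.mem_union, Set.mem_iUnion, Set.mem_singleton_iff] at hpS
    rcases hpS with (((rfl | ⟨j, rfl⟩) | ⟨i, rfl⟩) | ⟨j, i, rfl⟩)
    · exact dof_ext0 m' m T hT
    · exact dof_ext1 m' m T hT j
    · exact dof_ext2 m' m T hT i
    · exact dof_ext3 m' m T hT j i
  · show (dofS m' m T).ncard = (m' + 1) * (m + 1)
    exact dofS_ncard m' m T hT
end

section
/- Let n ≥ 1, m ≥ 1, and let M_1, …, M_m, Y_1, …, Y_n, Z_1, …, Z_n be random variables on a common probability space, each taking values in a finite set. Define, for each k = 1, …, n, the tuples V_k = (M_2, …, M_m, Y_{k+1}, …, Y_n), W_k = (Y_{k+1}, …, Y_n), and U_k = (M_1, …, M_m, Z_1, …, Z_{k−1}). Then Σ_{k=1}^{n} I((M_1, …, M_m) ; Y_k | V_k) ≤ Σ_{k=1}^{n} I((U_k, W_k) ; Y_k | V_k) − Σ_{k=1}^{n} I(W_k ; Z_k | U_k). -/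
open MeasureTheory

/-- Joint probability mass of three finitely-valued random variables. -/
noncomputable def jointP {Ω A B C : Type*} [MeasurableSpace Ω] (μ : Measure Ω)
    (X : Ω → A) (Y : Ω → B) (Z : Ω → C) (a : A) (b : B) (c : C) : ℝ :=
  (μ {ω | X ω = a ∧ Y ω = b ∧ Z ω = c}).toReal

/-- Conditional mutual information `I(X ; Y | Z)` of finitely-valued random variables,
`I(X ; Y | Z) = ∑ p(x,y,z) log ( p(x,y,z) p(z) / (p(x,z) p(y,z)) )`. -/
noncomputable def condMI {Ω A B C : Type*} [MeasurableSpace Ω]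
    [Fintype A] [Fintype B] [Fintype C]
    (μ : Measure Ω) (X : Ω → A) (Y : Ω → B) (Z : Ω → C) : ℝ :=
  ∑ a : A, ∑ b : B, ∑ c : C,
    jointP μ X Y Z a b c *
      Real.log ((jointP μ X Y Z a b c * (μ {ω | Z ω = c}).toReal) /
        ((μ {ω | X ω = a ∧ Z ω = c}).toReal * (μ {ω | Y ω = b ∧ Z ω = c}).toReal))

section Aux

variable {Ω : Type*} [MeasurableSpace Ω]

/-- probability mass of a finitely-valued random variable -/
noncomputable def pmAux (μ : Measure Ω) {A : Type*} (X : Ω → A) (a : A) : ℝ :=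
  (μ {ω | X ω = a}).toReal

/-- Shannon entropy -/
noncomputable def entAux (μ : Measure Ω) {A : Type*} [Fintype A] (X : Ω → A) : ℝ :=
  -∑ a : A, pmAux μ X a * Real.log (pmAux μ X a)

lemma pm_recode_support (μ : Measure Ω) {A B : Type*}
    (X : Ω → A) (X' : Ω → B) (f : A → B) (g : B → A)
    (h1 : ∀ ω, f (X ω) = X' ω) (h2 : ∀ ω, g (X' ω) = X ω)
    (a : A) (ha : pmAux μ X a ≠ 0) :
    g (f a) = a ∧ pmAux μ X a = pmAux μ X' (f a) := by
  have hne : {ω | X ω = a}.Nonempty := by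
    rcases Set.eq_empty_or_nonempty {ω | X ω = a} with h | h
    · exact absurd (by simp [pmAux, h]) ha
    · exact h
  obtain ⟨ω0, hω0⟩ := hne
  have hω0 : X ω0 = a := hω0
  have hg : g (f a) = a := by
    rw [← hω0, h1, h2]
  refine ⟨hg, ?_⟩
  have hset : {ω | X' ω = f a} = {ω | X ω = a} := by
    ext ω'
    simp only [Set.mem_setOf_eq]
    constructor
    · intro h
      have := h2 ω'
      rw [h, hg] at this
      exact this.symm
    · intro h
      rw [← h1 ω', h]
  rw [pmAux, pmAux, hset]

lemma ent_recode (μ : Measure Ω) {A B : Type*} [Fintype A] [Fintype B]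
    (X : Ω → A) (X' : Ω → B) (f : A → B) (g : B → A)
    (h1 : ∀ ω, f (X ω) = X' ω) (h2 : ∀ ω, g (X' ω) = X ω) :
    entAux μ X = entAux μ X' := by
  classical
  unfold entAux
  congr 1
  rw [← Finset.sum_filter_of_ne
      (p := fun a => pmAux μ X a ≠ 0)
      (fun a _ h => by intro h0; rw [h0] at h; simp at h),
    ← Finset.sum_filter_of_ne
      (p := fun b => pmAux μ X' b ≠ 0)
      (fun b _ h => by intro h0; rw [h0] at h; simp at h)]
  refine Finset.sum_nbij' f g ?_ ?_ ?_ ?_ ?_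
  · intro a ha
    simp only [Finset.mem_filter, Finset.mem_univ, true_and] at ha ⊢
    rw [← (pm_recode_support μ X X' f g h1 h2 a ha).2]; exact ha
  · intro b hb
    simp only [Finset.mem_filter, Finset.mem_univ, true_and] at hb ⊢
    rw [← (pm_recode_support μ X' X g f h2 h1 b hb).2]; exact hb
  · intro a ha
    simp only [Finset.mem_filter, Finset.mem_univ, true_and] at ha
    exact (pm_recode_support μ X X' f g h1 h2 a ha).1
  · intro b hb
    simp only [Finset.mem_filter, Finset.mem_univ, true_and] at hb
    exact (pm_recode_support μ X' X g f h2 h1 b hb).1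
  · intro a ha
    simp only [Finset.mem_filter, Finset.mem_univ, true_and] at ha
    rw [(pm_recode_support μ X X' f g h1 h2 a ha).2]

lemma mle_of_fibers {A : Type*} [Finite A] {X : Ω → A}
    (h : ∀ a, MeasurableSet {ω | X ω = a}) (s : Set A) : MeasurableSet (X ⁻¹' s) := by
  have : X ⁻¹' s = ⋃ a ∈ s, {ω | X ω = a} := by ext ω; simp
  rw [this]
  exact MeasurableSet.biUnion (Set.to_countable s) (fun a _ => h a)

lemma mle_comp {A B : Type*} (f : A → B) {X : Ω → A}
    (hX : ∀ s : Set A, MeasurableSet (X ⁻¹' s)) (s : Set B) :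
    MeasurableSet ((fun ω => f (X ω)) ⁻¹' s) := hX (f ⁻¹' s)

lemma mle_pair {A B : Type*} [Finite A] [Finite B] {X : Ω → A} {Y : Ω → B}
    (hX : ∀ s : Set A, MeasurableSet (X ⁻¹' s))
    (hY : ∀ s : Set B, MeasurableSet (Y ⁻¹' s))
    (s : Set (A × B)) : MeasurableSet ((fun ω => (X ω, Y ω)) ⁻¹' s) := by
  apply mle_of_fibers
  rintro ⟨a, b⟩
  have : {ω | (X ω, Y ω) = (a, b)} = X ⁻¹' {a} ∩ Y ⁻¹' {b} := by
    ext ω; simp [Prod.ext_iff]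
  rw [this]
  exact (hX _).inter (hY _)

lemma mle_pi {ι : Type*} [Fintype ι] {A : ι → Type*} [∀ i, Finite (A i)]
    {X : (i : ι) → Ω → A i}
    (hX : ∀ i, ∀ s : Set (A i), MeasurableSet (X i ⁻¹' s))
    (s : Set ((i : ι) → A i)) : MeasurableSet ((fun ω i => X i ω) ⁻¹' s) := by
  apply mle_of_fibers
  intro f
  have : {ω | (fun i => X i ω) = f} = ⋂ i, X i ⁻¹' {f i} := by
    ext ω; simp [funext_iff]
  rw [this]
  exact MeasurableSet.iInter (fun i => hX i {f i})

variable {Ω : Type*} [MeasurableSpace Ω]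

lemma sum_toReal_meas (μ : Measure Ω) [IsFiniteMeasure μ] {A : Type*} [Fintype A]
    (X : Ω → A) (hX : ∀ s : Set A, MeasurableSet (X ⁻¹' s))
    (S : Set Ω) (hS : MeasurableSet S) :
    ∑ a : A, (μ ({ω | X ω = a} ∩ S)).toReal = (μ S).toReal := by
  have hfib : ∀ a : A, MeasurableSet {ω | X ω = a} := fun a => hX {a}
  have hU : S = ⋃ a : A, ({ω | X ω = a} ∩ S) := by
    ext ω; simp
  have hdis : Pairwise (Function.onFun Disjoint (fun a : A => {ω | X ω = a} ∩ S)) := by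
    intro a b hab
    simp only [Function.onFun]
    apply Set.disjoint_left.2
    rintro ω ⟨h1, _⟩ ⟨h2, _⟩
    exact hab (h1.symm.trans h2)
  have : μ S = ∑ a : A, μ ({ω | X ω = a} ∩ S) := by
    conv_lhs => rw [hU]
    rw [measure_iUnion hdis (fun a => (hfib a).inter hS), tsum_fintype]
  rw [this, ENNReal.toReal_sum (fun a _ => measure_ne_top μ _)]

lemma condMI_eq_ent (μ : Measure Ω) [IsProbabilityMeasure μ]
    {A B C : Type*} [Fintype A] [Fintype B] [Fintype C]
    (X : Ω → A) (Y : Ω → B) (Z : Ω → C)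
    (hX : ∀ s : Set A, MeasurableSet (X ⁻¹' s))
    (hY : ∀ s : Set B, MeasurableSet (Y ⁻¹' s))
    (hZ : ∀ s : Set C, MeasurableSet (Z ⁻¹' s)) :
    condMI μ X Y Z =
      entAux μ (fun ω => (X ω, Z ω)) + entAux μ (fun ω => (Y ω, Z ω))
        - entAux μ (fun ω => (X ω, Y ω, Z ω)) - entAux μ Z := by
  classical
  set q : A → B → C → ℝ := fun a b c => jointP μ X Y Z a b c with hq
  set pxz : A → C → ℝ := fun a c => (μ {ω | X ω = a ∧ Z ω = c}).toReal with hpxz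
  set pyz : B → C → ℝ := fun b c => (μ {ω | Y ω = b ∧ Z ω = c}).toReal with hpyz
  set pz : C → ℝ := fun c => (μ {ω | Z ω = c}).toReal with hpz
  -- measurability of basic sets
  have mX : ∀ a, MeasurableSet {ω | X ω = a} := fun a => hX {a}
  have mY : ∀ b, MeasurableSet {ω | Y ω = b} := fun b => hY {b}
  have mZ : ∀ c, MeasurableSet {ω | Z ω = c} := fun c => hZ {c}
  have mXZ : ∀ a c, MeasurableSet {ω | X ω = a ∧ Z ω = c} := by
    intro a c
    have : {ω | X ω = a ∧ Z ω = c} = {ω | X ω = a} ∩ {ω | Z ω = c} := by ext ω; simp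
    rw [this]; exact (mX a).inter (mZ c)
  have mYZ : ∀ b c, MeasurableSet {ω | Y ω = b ∧ Z ω = c} := by
    intro b c
    have : {ω | Y ω = b ∧ Z ω = c} = {ω | Y ω = b} ∩ {ω | Z ω = c} := by ext ω; simp
    rw [this]; exact (mY b).inter (mZ c)
  -- marginals
  have marg_b : ∀ a c, ∑ b : B, q a b c = pxz a c := by
    intro a c
    have hset : ∀ b, {ω | X ω = a ∧ Y ω = b ∧ Z ω = c}
        = {ω | Y ω = b} ∩ {ω | X ω = a ∧ Z ω = c} := by
      intro b; ext ω; simp only [Set.mem_setOf_eq, Set.mem_inter_iff]; try tauto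
    have : ∀ b, q a b c = (μ ({ω | Y ω = b} ∩ {ω | X ω = a ∧ Z ω = c})).toReal := by
      intro b
      simp only [hq, jointP, hset b]
    simp only [this]
    exact sum_toReal_meas μ Y hY _ (mXZ a c)
  have marg_a : ∀ b c, ∑ a : A, q a b c = pyz b c := by
    intro b c
    have hset : ∀ a, {ω | X ω = a ∧ Y ω = b ∧ Z ω = c}
        = {ω | X ω = a} ∩ {ω | Y ω = b ∧ Z ω = c} := by
      intro a; ext ω; simp only [Set.mem_setOf_eq, Set.mem_inter_iff]; try tauto
    have : ∀ a, q a b c = (μ ({ω | X ω = a} ∩ {ω | Y ω = b ∧ Z ω = c})).toReal := by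
      intro a
      simp only [hq, jointP, hset a]
    simp only [this]
    exact sum_toReal_meas μ X hX _ (mYZ b c)
  have marg_ab : ∀ c, ∑ a : A, pxz a c = pz c := by
    intro c
    have hset : ∀ a, {ω | X ω = a ∧ Z ω = c} = {ω | X ω = a} ∩ {ω | Z ω = c} := by
      intro a; ext ω; simp only [Set.mem_setOf_eq, Set.mem_inter_iff]
    have : ∀ a, pxz a c = (μ ({ω | X ω = a} ∩ {ω | Z ω = c})).toReal := by
      intro a
      simp only [hpxz, hset a]
    simp only [this]
    exact sum_toReal_meas μ X hX _ (mZ c)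
  have marg_byz : ∀ c, ∑ b : B, pyz b c = pz c := by
    intro c
    have hset : ∀ b, {ω | Y ω = b ∧ Z ω = c} = {ω | Y ω = b} ∩ {ω | Z ω = c} := by
      intro b; ext ω; simp only [Set.mem_setOf_eq, Set.mem_inter_iff]
    have : ∀ b, pyz b c = (μ ({ω | Y ω = b} ∩ {ω | Z ω = c})).toReal := by
      intro b
      simp only [hpyz, hset b]
    simp only [this]
    exact sum_toReal_meas μ Y hY _ (mZ c)
  -- nonnegativity and domination
  have hq_nonneg : ∀ a b c, 0 ≤ q a b c := fun a b c => ENNReal.toReal_nonneg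
  have hq_le_pxz : ∀ a b c, q a b c ≤ pxz a c := by
    intro a b c
    apply ENNReal.toReal_mono (measure_ne_top μ _)
    apply measure_mono
    intro ω; simp only [Set.mem_setOf_eq]; tauto
  have hq_le_pyz : ∀ a b c, q a b c ≤ pyz b c := by
    intro a b c
    apply ENNReal.toReal_mono (measure_ne_top μ _)
    apply measure_mono
    intro ω; simp only [Set.mem_setOf_eq]; tauto
  have hq_le_pz : ∀ a b c, q a b c ≤ pz c := by
    intro a b c
    apply ENNReal.toReal_mono (measure_ne_top μ _)
    apply measure_mono
    intro ω; simp only [Set.mem_setOf_eq]; tauto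
  -- termwise expansion
  have hterm : ∀ a b c,
      q a b c * Real.log ((q a b c * pz c) / (pxz a c * pyz b c)) =
      q a b c * Real.log (q a b c) + q a b c * Real.log (pz c)
        - q a b c * Real.log (pxz a c) - q a b c * Real.log (pyz b c) := by
    intro a b c
    rcases eq_or_lt_of_le (hq_nonneg a b c) with h0 | hpos
    · rw [← h0]; ring
    · have hxz : pxz a c ≠ 0 := fun h => absurd (lt_of_lt_of_le hpos (hq_le_pxz a b c)) (by rw [h]; simp)
      have hyz : pyz b c ≠ 0 := fun h => absurd (lt_of_lt_of_le hpos (hq_le_pyz a b c)) (by rw [h]; simp)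
      have hz : pz c ≠ 0 := fun h => absurd (lt_of_lt_of_le hpos (hq_le_pz a b c)) (by rw [h]; simp)
      have hqne : q a b c ≠ 0 := ne_of_gt hpos
      rw [Real.log_div (mul_ne_zero hqne hz) (mul_ne_zero hxz hyz),
          Real.log_mul hqne hz, Real.log_mul hxz hyz]
      ring
  -- pm identities
  have pm_xz : ∀ (p : A × C), pmAux μ (fun ω => (X ω, Z ω)) p = pxz p.1 p.2 := by
    rintro ⟨a, c⟩
    have hset : {ω | (X ω, Z ω) = (a, c)} = {ω | X ω = a ∧ Z ω = c} := by
      ext ω; simp [Prod.ext_iff]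
    simp only [pmAux, hpxz, hset]
  have pm_yz : ∀ (p : B × C), pmAux μ (fun ω => (Y ω, Z ω)) p = pyz p.1 p.2 := by
    rintro ⟨b, c⟩
    have hset : {ω | (Y ω, Z ω) = (b, c)} = {ω | Y ω = b ∧ Z ω = c} := by
      ext ω; simp [Prod.ext_iff]
    simp only [pmAux, hpyz, hset]
  have pm_xyz : ∀ (p : A × B × C), pmAux μ (fun ω => (X ω, Y ω, Z ω)) p = q p.1 p.2.1 p.2.2 := by
    rintro ⟨a, b, c⟩
    have hset : {ω | (X ω, Y ω, Z ω) = (a, b, c)} = {ω | X ω = a ∧ Y ω = b ∧ Z ω = c} := by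
      ext ω; simp [Prod.ext_iff]
    simp only [pmAux, hq, jointP, hset]
  have pm_z : ∀ c, pmAux μ Z c = pz c := fun c => rfl
  -- expand condMI
  have step1 : condMI μ X Y Z =
      (∑ a, ∑ b, ∑ c, q a b c * Real.log (q a b c))
      + (∑ a, ∑ b, ∑ c, q a b c * Real.log (pz c))
      - (∑ a, ∑ b, ∑ c, q a b c * Real.log (pxz a c))
      - (∑ a, ∑ b, ∑ c, q a b c * Real.log (pyz b c)) := by
    rw [condMI]
    show ∑ a, ∑ b, ∑ c, q a b c * Real.log ((q a b c * pz c) / (pxz a c * pyz b c)) = _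
    simp only [hterm]
    simp only [Finset.sum_add_distrib, Finset.sum_sub_distrib]
  rw [step1]
  -- identify each piece
  have e_xyz : (∑ a, ∑ b, ∑ c, q a b c * Real.log (q a b c)) =
      - entAux μ (fun ω => (X ω, Y ω, Z ω)) := by
    rw [entAux, neg_neg, Fintype.sum_prod_type]
    apply Finset.sum_congr rfl; intro a _
    rw [Fintype.sum_prod_type]
    apply Finset.sum_congr rfl; intro b _
    apply Finset.sum_congr rfl; intro c _
    rw [pm_xyz ⟨a, b, c⟩]
  have swap1 : ∀ (F : A → B → C → ℝ),
      (∑ a, ∑ b, ∑ c, F a b c) = ∑ c, ∑ a, ∑ b, F a b c := by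
    intro F
    rw [Finset.sum_congr rfl (fun (a : A) (_ : a ∈ Finset.univ) => (Finset.sum_comm (f := F a))), Finset.sum_comm]
  have swap2 : ∀ (F : A → B → C → ℝ),
      (∑ a, ∑ b, ∑ c, F a b c) = ∑ a, ∑ c, ∑ b, F a b c :=
    fun F => Finset.sum_congr rfl (fun a _ => Finset.sum_comm (f := F a))
  have swap3 : ∀ (F : A → B → C → ℝ),
      (∑ a, ∑ b, ∑ c, F a b c) = ∑ b, ∑ c, ∑ a, F a b c := by
    intro F
    rw [Finset.sum_comm]
    exact Finset.sum_congr rfl (fun b _ => Finset.sum_comm (f := fun a c => F a b c))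
  have e_z : (∑ a, ∑ b, ∑ c, q a b c * Real.log (pz c)) = - entAux μ Z := by
    rw [swap1, entAux, neg_neg]
    apply Finset.sum_congr rfl; intro c _
    rw [pm_z]
    rw [show (∑ a, ∑ b, q a b c * Real.log (pz c))
        = (∑ a, ∑ b, q a b c) * Real.log (pz c) by
      rw [Finset.sum_mul]
      exact Finset.sum_congr rfl (fun a _ => (Finset.sum_mul _ _ _).symm)]
    rw [show (∑ a, ∑ b, q a b c) = pz c by
      rw [Finset.sum_congr rfl (fun a _ => marg_b a c)]; exact marg_ab c]
  have e_xz : (∑ a, ∑ b, ∑ c, q a b c * Real.log (pxz a c)) =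
      - entAux μ (fun ω => (X ω, Z ω)) := by
    rw [swap2, entAux, neg_neg, Fintype.sum_prod_type]
    apply Finset.sum_congr rfl; intro a _
    apply Finset.sum_congr rfl; intro c _
    rw [pm_xz ⟨a, c⟩, ← Finset.sum_mul, marg_b a c]
  have e_yz : (∑ a, ∑ b, ∑ c, q a b c * Real.log (pyz b c)) =
      - entAux μ (fun ω => (Y ω, Z ω)) := by
    rw [swap3, entAux, neg_neg, Fintype.sum_prod_type]
    apply Finset.sum_congr rfl; intro b _
    apply Finset.sum_congr rfl; intro c _
    rw [pm_yz ⟨b, c⟩, ← Finset.sum_mul, marg_a b c]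
  rw [e_xyz, e_z, e_xz, e_yz]
  ring

end Aux


/-- Csiszár-sum-identity bound
`∑ₖ I(M₁…M_m ; Y_k | V_k) ≤ ∑ₖ I((U_k, W_k) ; Y_k | V_k) − ∑ₖ I(W_k ; Z_k | U_k)`,
where `V_k = (M₂…M_m, Y_{k+1}…Yₙ)`, `W_k = (Y_{k+1}…Yₙ)`, and
`U_k = (M₁…M_m, Z₁…Z_{k-1})`, partial tuples being encoded as `Option`-valued
functions on the index type. -/
theorem first_dynamic_user_rate_bound (n m : ℕ) (hn : 1 ≤ n) (hm : 1 ≤ m)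
    {Ω : Type*} [MeasurableSpace Ω] (μ : Measure Ω) [IsProbabilityMeasure μ]
    {γ : Fin m → Type*} {δ ε : Fin n → Type*}
    [∀ i, Fintype (γ i)] [∀ i, Fintype (δ i)] [∀ i, Fintype (ε i)]
    (M : (i : Fin m) → Ω → γ i) (Y : (i : Fin n) → Ω → δ i) (Z : (i : Fin n) → Ω → ε i)
    (hM : ∀ i, @Measurable Ω (γ i) _ ⊤ (M i))
    (hY : ∀ i, @Measurable Ω (δ i) _ ⊤ (Y i))
    (hZ : ∀ i, @Measurable Ω (ε i) _ ⊤ (Z i))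
    (V : (k : Fin n) → Ω → ((i : Fin m) → Option (γ i)) × ((i : Fin n) → Option (δ i)))
    (hV : ∀ k ω, V k ω =
      ((fun i : Fin m => if 0 < (i : ℕ) then some (M i ω) else none),
       (fun i : Fin n => if (k : ℕ) < (i : ℕ) then some (Y i ω) else none)))
    (W : (k : Fin n) → Ω → ((i : Fin n) → Option (δ i)))
    (hW : ∀ k ω, W k ω =
      fun i : Fin n => if (k : ℕ) < (i : ℕ) then some (Y i ω) else none)
    (U : (k : Fin n) → Ω → ((i : Fin m) → γ i) × ((i : Fin n) → Option (ε i)))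
    (hU : ∀ k ω, U k ω =
      ((fun i : Fin m => M i ω),
       (fun i : Fin n => if (i : ℕ) < (k : ℕ) then some (Z i ω) else none))) :
    ∑ k : Fin n, condMI μ (fun ω (i : Fin m) => M i ω) (Y k) (V k) ≤
      (∑ k : Fin n, condMI μ (fun ω => (U k ω, W k ω)) (Y k) (V k)) -
        ∑ k : Fin n, condMI μ (W k) (Z k) (U k) := by
  classical
  -- Ω is nonempty
  have hΩne : Nonempty Ω := by
    by_contra h
    have h1 : μ Set.univ = 1 := measure_univ
    rw [Set.univ_eq_empty_iff.2 (not_nonempty_iff.1 h)] at h1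
    simp at h1
  obtain ⟨ω₀⟩ := hΩne
  -- canonical random variables
  set Mv : Ω → (i : Fin m) → γ i := fun ω (i : Fin m) => M i ω with hMv
  set Yge : ℕ → Ω → ((i : Fin n) → Option (δ i)) :=
    fun j ω i => if j ≤ (i : ℕ) then some (Y i ω) else none with hYge
  set Zlt : ℕ → Ω → ((i : Fin n) → Option (ε i)) :=
    fun j ω i => if (i : ℕ) < j then some (Z i ω) else none with hZlt
  set mtf : ((i : Fin m) → γ i) → ((i : Fin m) → Option (γ i)) :=
    fun v i => if 0 < (i : ℕ) then some (v i) else none with hmtf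
  -- canonical forms of V, W, U
  have hW' : ∀ k : Fin n, W k = Yge ((k : ℕ) + 1) := by
    intro k; funext ω; rw [hW]; funext i
    simp only [hYge]
    by_cases h2 : (k : ℕ) + 1 ≤ (i : ℕ)
    · rw [if_pos h2, if_pos (by omega)]
    · rw [if_neg h2, if_neg (by omega)]
  have hV' : ∀ k : Fin n, V k = fun ω => (mtf (Mv ω), Yge ((k : ℕ) + 1) ω) := by
    intro k; funext ω; rw [hV]
    refine Prod.ext ?_ ?_
    · simp only [hmtf, hMv]
    · simp only [hYge]
      funext i
      by_cases h2 : (k : ℕ) + 1 ≤ (i : ℕ)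
      · rw [if_pos h2, if_pos (by omega)]
      · rw [if_neg h2, if_neg (by omega)]
  have hU' : ∀ k : Fin n, U k = fun ω => (Mv ω, Zlt (k : ℕ) ω) := by
    intro k; funext ω; rw [hU]
  -- measurability
  have mleM : ∀ i, ∀ s : Set (γ i), MeasurableSet (M i ⁻¹' s) :=
    fun i s => hM i (MeasurableSpace.measurableSet_top)
  have mleYb : ∀ i, ∀ s : Set (δ i), MeasurableSet (Y i ⁻¹' s) :=
    fun i s => hY i (MeasurableSpace.measurableSet_top)
  have mleZb : ∀ i, ∀ s : Set (ε i), MeasurableSet (Z i ⁻¹' s) :=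
    fun i s => hZ i (MeasurableSpace.measurableSet_top)
  have mleMv : ∀ s, MeasurableSet (Mv ⁻¹' s) := by
    rw [hMv]; exact mle_pi mleM
  have mleYge : ∀ j : ℕ, ∀ s, MeasurableSet (Yge j ⁻¹' s) := by
    intro j
    rw [hYge]
    apply mle_pi (X := fun (i : Fin n) ω => if j ≤ (i : ℕ) then some (Y i ω) else none)
    intro i
    by_cases hji : j ≤ (i : ℕ)
    · simp only [if_pos hji]
      exact mle_comp some (mleYb i)
    · simp only [if_neg hji]
      intro s
      by_cases hns : (none : Option (δ i)) ∈ s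
      · convert MeasurableSet.univ
        ext ω; simp [hns]
      · convert MeasurableSet.empty
        ext ω; simp [hns]
  have mleZlt : ∀ j : ℕ, ∀ s, MeasurableSet (Zlt j ⁻¹' s) := by
    intro j
    rw [hZlt]
    apply mle_pi (X := fun (i : Fin n) ω => if (i : ℕ) < j then some (Z i ω) else none)
    intro i
    by_cases hji : (i : ℕ) < j
    · simp only [if_pos hji]
      exact mle_comp some (mleZb i)
    · simp only [if_neg hji]
      intro s
      by_cases hns : (none : Option (ε i)) ∈ s
      · convert MeasurableSet.univ
        ext ω; simp [hns]
      · convert MeasurableSet.empty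
        ext ω; simp [hns]
  have mleVc : ∀ k : Fin n, ∀ s,
      MeasurableSet ((fun ω => (mtf (Mv ω), Yge ((k : ℕ) + 1) ω)) ⁻¹' s) :=
    fun k => mle_pair (mle_comp mtf mleMv) (mleYge _)
  have mleUc : ∀ k : Fin n, ∀ s,
      MeasurableSet ((fun ω => (Mv ω, Zlt (k : ℕ) ω)) ⁻¹' s) :=
    fun k => mle_pair mleMv (mleZlt _)
  have mleUWc : ∀ k : Fin n, ∀ s,
      MeasurableSet ((fun ω => ((Mv ω, Zlt (k : ℕ) ω), Yge ((k : ℕ) + 1) ω)) ⁻¹' s) :=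
    fun k => mle_pair (mleUc k) (mleYge _)
  -- insertion / extraction / deletion helpers
  set insY : (k : Fin n) → δ k → ((i : Fin n) → Option (δ i)) → ((i : Fin n) → Option (δ i)) :=
    fun k yk w i => if h : i = k then some (cast (congrArg δ h).symm yk) else w i with hinsY
  set extY : (k : Fin n) → ((i : Fin n) → Option (δ i)) → δ k :=
    fun k w => (w k).getD (Y k ω₀) with hextY
  set delY : (k : Fin n) → ((i : Fin n) → Option (δ i)) → ((i : Fin n) → Option (δ i)) :=
    fun k w i => if (k : ℕ) < (i : ℕ) then w i else none with hdelY
  set insZ : (k : Fin n) → ε k → ((i : Fin n) → Option (ε i)) → ((i : Fin n) → Option (ε i)) :=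
    fun k zk w i => if h : i = k then some (cast (congrArg ε h).symm zk) else w i with hinsZ
  set extZ : (k : Fin n) → ((i : Fin n) → Option (ε i)) → ε k :=
    fun k w => (w k).getD (Z k ω₀) with hextZ
  set delZ : (k : Fin n) → ((i : Fin n) → Option (ε i)) → ((i : Fin n) → Option (ε i)) :=
    fun k w i => if (i : ℕ) < (k : ℕ) then w i else none with hdelZ
  have keyInsY : ∀ (k : Fin n) ω, insY k (Y k ω) (Yge ((k : ℕ) + 1) ω) = Yge (k : ℕ) ω := by
    intro k ω; funext i
    simp only [hinsY, hYge]
    by_cases h : i = k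
    · subst h
      simp
    · rw [dif_neg h]
      have hne : (i : ℕ) ≠ (k : ℕ) := fun hh => h (Fin.ext hh)
      by_cases h2 : (k : ℕ) + 1 ≤ (i : ℕ)
      · rw [if_pos h2, if_pos (by omega)]
      · rw [if_neg h2, if_neg (by omega)]
  have keyExtY : ∀ (k : Fin n) ω, extY k (Yge (k : ℕ) ω) = Y k ω := by
    intro k ω
    simp only [hextY, hYge, if_pos (le_refl (k : ℕ)), Option.getD_some]
  have keyDelY : ∀ (k : Fin n) ω, delY k (Yge (k : ℕ) ω) = Yge ((k : ℕ) + 1) ω := by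
    intro k ω; funext i
    simp only [hdelY, hYge]
    by_cases h : (k : ℕ) < (i : ℕ)
    · rw [if_pos h, if_pos (by omega), if_pos (by omega)]
    · rw [if_neg h, if_neg (by omega)]
  have keyInsZ : ∀ (k : Fin n) ω, insZ k (Z k ω) (Zlt (k : ℕ) ω) = Zlt ((k : ℕ) + 1) ω := by
    intro k ω; funext i
    simp only [hinsZ, hZlt]
    by_cases h : i = k
    · subst h
      simp
    · rw [dif_neg h]
      have hne : (i : ℕ) ≠ (k : ℕ) := fun hh => h (Fin.ext hh)
      by_cases h2 : (i : ℕ) < (k : ℕ)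
      · rw [if_pos h2, if_pos (by omega)]
      · rw [if_neg h2, if_neg (by omega)]
  have keyExtZ : ∀ (k : Fin n) ω, extZ k (Zlt ((k : ℕ) + 1) ω) = Z k ω := by
    intro k ω
    simp only [hextZ, hZlt, if_pos (Nat.lt_succ_self (k : ℕ)), Option.getD_some]
  have keyDelZ : ∀ (k : Fin n) ω, delZ k (Zlt ((k : ℕ) + 1) ω) = Zlt (k : ℕ) ω := by
    intro k ω; funext i
    simp only [hdelZ, hZlt]
    by_cases h : (i : ℕ) < (k : ℕ)
    · rw [if_pos h, if_pos (by omega), if_pos (by omega)]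
    · rw [if_neg h, if_neg (by omega)]
  -- entropy quantities
  set Bt : ℕ → ℝ := fun j => entAux μ (fun ω => (Mv ω, Yge j ω)) with hBt
  set Gt : ℕ → ℝ := fun j => entAux μ (fun ω => (Mv ω, Zlt j ω)) with hGt
  set Ct : ℕ → ℝ := fun j => entAux μ (fun ω => (Mv ω, Zlt j ω, Yge j ω)) with hCt
  set et : Fin n → ℝ :=
    fun k => entAux μ (fun ω => ((Mv ω, Zlt (k : ℕ) ω), Yge ((k : ℕ) + 1) ω)) with het
  set at_ : Fin n → ℝ :=
    fun k => entAux μ (fun ω => (mtf (Mv ω), Yge ((k : ℕ) + 1) ω)) with hat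
  set ct : Fin n → ℝ :=
    fun k => entAux μ (fun ω => (Y k ω, (mtf (Mv ω), Yge ((k : ℕ) + 1) ω))) with hct
  -- rewrite goal in canonical form
  simp only [hV', hU', hW']
  -- the three per-k identities
  have hT1 : ∀ k : Fin n,
      condMI μ Mv (Y k) (fun ω => (mtf (Mv ω), Yge ((k : ℕ) + 1) ω))
        = Bt ((k : ℕ) + 1) + ct k - Bt (k : ℕ) - at_ k := by
    intro k
    rw [condMI_eq_ent μ Mv (Y k) (fun ω => (mtf (Mv ω), Yge ((k : ℕ) + 1) ω))
      mleMv (mleYb k) (mleVc k)]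
    have r1 : entAux μ (fun ω => (Mv ω, (mtf (Mv ω), Yge ((k : ℕ) + 1) ω)))
        = Bt ((k : ℕ) + 1) := by
      rw [hBt]
      exact ent_recode μ _ _ (fun p => (p.1, p.2.2)) (fun p => (p.1, (mtf p.1, p.2)))
        (fun ω => rfl) (fun ω => rfl)
    have r2 : entAux μ (fun ω => (Mv ω, Y k ω, (mtf (Mv ω), Yge ((k : ℕ) + 1) ω)))
        = Bt (k : ℕ) := by
      rw [hBt]
      refine ent_recode μ _ _
        (fun p => (p.1, insY k p.2.1 p.2.2.2))
        (fun p => (p.1, extY k p.2, (mtf p.1, delY k p.2))) ?_ ?_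
      · intro ω
        simp only
        rw [keyInsY k ω]
      · intro ω
        simp only
        rw [keyExtY k ω, keyDelY k ω]
    rw [r1, r2, hct, hat]
  have hT2 : ∀ k : Fin n,
      condMI μ (fun ω => ((Mv ω, Zlt (k : ℕ) ω), Yge ((k : ℕ) + 1) ω)) (Y k)
          (fun ω => (mtf (Mv ω), Yge ((k : ℕ) + 1) ω))
        = et k + ct k - Ct (k : ℕ) - at_ k := by
    intro k
    rw [condMI_eq_ent μ _ (Y k) (fun ω => (mtf (Mv ω), Yge ((k : ℕ) + 1) ω))
      (mleUWc k) (mleYb k) (mleVc k)]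
    have r1 : entAux μ (fun ω => (((Mv ω, Zlt (k : ℕ) ω), Yge ((k : ℕ) + 1) ω),
        (mtf (Mv ω), Yge ((k : ℕ) + 1) ω))) = et k := by
      rw [het]
      exact ent_recode μ _ _ (fun p => p.1) (fun p => (p, (mtf p.1.1, p.2)))
        (fun ω => rfl) (fun ω => rfl)
    have r2 : entAux μ (fun ω => (((Mv ω, Zlt (k : ℕ) ω), Yge ((k : ℕ) + 1) ω), Y k ω,
        (mtf (Mv ω), Yge ((k : ℕ) + 1) ω))) = Ct (k : ℕ) := by
      rw [hCt]
      refine ent_recode μ _ _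
        (fun p => (p.1.1.1, p.1.1.2, insY k p.2.1 p.1.2))
        (fun q => (((q.1, q.2.1), delY k q.2.2), extY k q.2.2, (mtf q.1, delY k q.2.2))) ?_ ?_
      · intro ω
        simp only
        rw [keyInsY k ω]
      · intro ω
        simp only
        rw [keyExtY k ω, keyDelY k ω]
    rw [r1, r2, hct, hat]
  have hT3 : ∀ k : Fin n,
      condMI μ (Yge ((k : ℕ) + 1)) (Z k) (fun ω => (Mv ω, Zlt (k : ℕ) ω))
        = et k + Gt ((k : ℕ) + 1) - Ct ((k : ℕ) + 1) - Gt (k : ℕ) := by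
    intro k
    rw [condMI_eq_ent μ (Yge ((k : ℕ) + 1)) (Z k) (fun ω => (Mv ω, Zlt (k : ℕ) ω))
      (mleYge _) (mleZb k) (mleUc k)]
    have r1 : entAux μ (fun ω => (Yge ((k : ℕ) + 1) ω, (Mv ω, Zlt (k : ℕ) ω))) = et k := by
      rw [het]
      exact ent_recode μ _ _ (fun p => (p.2, p.1)) (fun q => (q.2, q.1))
        (fun ω => rfl) (fun ω => rfl)
    have r2 : entAux μ (fun ω => (Z k ω, (Mv ω, Zlt (k : ℕ) ω))) = Gt ((k : ℕ) + 1) := by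
      rw [hGt]
      refine ent_recode μ _ _
        (fun p => (p.2.1, insZ k p.1 p.2.2))
        (fun q => (extZ k q.2, (q.1, delZ k q.2))) ?_ ?_
      · intro ω
        simp only
        rw [keyInsZ k ω]
      · intro ω
        simp only
        rw [keyExtZ k ω, keyDelZ k ω]
    have r3 : entAux μ (fun ω => (Yge ((k : ℕ) + 1) ω, Z k ω, (Mv ω, Zlt (k : ℕ) ω)))
        = Ct ((k : ℕ) + 1) := by
      rw [hCt]
      refine ent_recode μ _ _
        (fun p => (p.2.2.1, insZ k p.2.1 p.2.2.2, p.1))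
        (fun q => (q.2.2, extZ k q.2.1, (q.1, delZ k q.2.1))) ?_ ?_
      · intro ω
        simp only
        rw [keyInsZ k ω]
      · intro ω
        simp only
        rw [keyExtZ k ω, keyDelZ k ω]
    have r4 : entAux μ (fun ω => (Mv ω, Zlt (k : ℕ) ω)) = Gt (k : ℕ) := by rw [hGt]
    rw [r1, r2, r3, r4]
  -- boundary identifications
  have hC0 : Ct 0 = Bt 0 := by
    rw [hCt, hBt]
    refine ent_recode μ _ _ (fun q => (q.1, q.2.2))
      (fun p => (p.1, (fun i => none), p.2)) (fun ω => rfl) ?_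
    intro ω
    simp only
    have : (fun i : Fin n => (none : Option (ε i))) = Zlt 0 ω := by
      funext i; simp [hZlt]
    rw [this]
  have hCn : Ct n = Gt n := by
    rw [hCt, hGt]
    refine ent_recode μ _ _ (fun q => (q.1, q.2.1))
      (fun p => (p.1, p.2, (fun i => none))) (fun ω => rfl) ?_
    · intro ω
      simp only
      have : (fun i : Fin n => (none : Option (δ i))) = Yge n ω := by
        funext i; simp [hYge, Nat.not_le.2 i.isLt]
      rw [this]
  have hG0Bn : Gt 0 = Bt n := by
    rw [hGt, hBt]
    refine ent_recode μ _ _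
      (fun p => (p.1, (fun i : Fin n => (none : Option (δ i)))))
      (fun p => (p.1, (fun i : Fin n => (none : Option (ε i))))) ?_ ?_
    · intro ω
      simp only
      have : (fun i : Fin n => (none : Option (δ i))) = Yge n ω := by
        funext i; simp [hYge, Nat.not_le.2 i.isLt]
      rw [this]
    · intro ω
      simp only
      have : (fun i : Fin n => (none : Option (ε i))) = Zlt 0 ω := by
        funext i; simp [hZlt]
      rw [this]
  -- rewrite the three sums
  rw [Finset.sum_congr rfl (fun k _ => hT1 k), Finset.sum_congr rfl (fun k _ => hT2 k),
    Finset.sum_congr rfl (fun k _ => hT3 k)]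
  -- telescoping sums
  have telB : ∑ k : Fin n, (Bt ((k : ℕ) + 1) - Bt (k : ℕ)) = Bt n - Bt 0 := by
    rw [Fin.sum_univ_eq_sum_range (fun j => Bt (j + 1) - Bt j) n, Finset.sum_range_sub]
  have telG : ∑ k : Fin n, (Gt ((k : ℕ) + 1) - Gt (k : ℕ)) = Gt n - Gt 0 := by
    rw [Fin.sum_univ_eq_sum_range (fun j => Gt (j + 1) - Gt j) n, Finset.sum_range_sub]
  have telC : ∑ k : Fin n, (Ct ((k : ℕ) + 1) - Ct (k : ℕ)) = Ct n - Ct 0 := by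
    rw [Fin.sum_univ_eq_sum_range (fun j => Ct (j + 1) - Ct j) n, Finset.sum_range_sub]
  -- final assembly
  have main : (∑ k : Fin n, (et k + ct k - Ct (k : ℕ) - at_ k))
      - (∑ k : Fin n, (et k + Gt ((k : ℕ) + 1) - Ct ((k : ℕ) + 1) - Gt (k : ℕ)))
      = ∑ k : Fin n, (Bt ((k : ℕ) + 1) + ct k - Bt (k : ℕ) - at_ k) := by
    rw [← Finset.sum_sub_distrib]
    have he : ∀ k ∈ (Finset.univ : Finset (Fin n)),
        (et k + ct k - Ct (k : ℕ) - at_ k)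
          - (et k + Gt ((k : ℕ) + 1) - Ct ((k : ℕ) + 1) - Gt (k : ℕ))
        = (Bt ((k : ℕ) + 1) + ct k - Bt (k : ℕ) - at_ k)
          + ((Ct ((k : ℕ) + 1) - Ct (k : ℕ)) - (Gt ((k : ℕ) + 1) - Gt (k : ℕ))
              - (Bt ((k : ℕ) + 1) - Bt (k : ℕ))) := fun k _ => by ring
    rw [Finset.sum_congr rfl he, Finset.sum_add_distrib]
    have tel0 : ∑ k : Fin n, ((Ct ((k : ℕ) + 1) - Ct (k : ℕ))
        - (Gt ((k : ℕ) + 1) - Gt (k : ℕ)) - (Bt ((k : ℕ) + 1) - Bt (k : ℕ))) = 0 := by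
      rw [Finset.sum_sub_distrib, Finset.sum_sub_distrib]
      rw [telC, telG, telB, hC0, hCn, hG0Bn]
      ring
    rw [tel0, add_zero]
  linarith [main]
end
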